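/- arXiv:2602.16289 — 5 statements merged into one kernel-verified Lean document; each statement's English description precedes it below -/
import Mathlib

section
/- Let ℐ be a matroid on the object set O, and let M, N be two ℐ-constrained matchings in a matching instance such that every agent is matched in both M and N and both M(A) and N(A) are bases of ℐ. Let P be a directed path from agent a' to agent b' in the exchange graph D_{N→M}, and let A(P) be the set of agents on P. Then there exists A' ⊆ A(P) with a', b' ∈ A' such that the assignment M' defined by M'(a) = N(a) for all a ∈ A' \ {b'}, M'(b') = ∅ (b' unmatched), and M'(a) = M(a) for all a ∈ A \ A' is an ℐ-constrained matching. -/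
open scoped Classical

/-- A matching in a bipartite graph with agent set `A`, object set `O` and adjacency
relation `adj`, represented by the partial assignment `M : A → Option O` of objects to
agents: matched pairs are edges, and each object is matched to at most one agent. -/
def IsMatching {A O : Type*} (adj : A → O → Prop) (M : A → Option O) : Prop :=
  (∀ a o, M a = some o → adj a o) ∧
  (∀ a a' o, M a = some o → M a' = some o → a = a')

/-- The lifted strict preference of agent `a` over matchings: `M ≻ₐ N` iff
`M(a) ≻ₐ N(a)`, where any assigned object is preferred to being unmatched. -/
def PrefM {A O : Type*} (pref : A → O → O → Prop) (a : A) (M N : A → Option O) : Prop :=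
  (∃ o o', M a = some o ∧ N a = some o' ∧ pref a o o') ∨
  (∃ o, M a = some o ∧ N a = none)

/-- `pref a` is a strict partial order on the objects adjacent to `a`. -/
def IsPrefOrder {A O : Type*} (adj : A → O → Prop) (pref : A → O → O → Prop) : Prop :=
  ∀ a : A, (∀ o, ¬ pref a o o) ∧
    (∀ o o' o'', pref a o o' → pref a o' o'' → pref a o o'') ∧
    (∀ o o', pref a o o' → adj a o ∧ adj a o')

/-- The set `M(A)` of objects matched to agents. -/
def matchedObjs {A O : Type*} (M : A → Option O) : Set O := {o | ∃ a, M a = some o}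

/-- A matching is `ℐ`-constrained if the set of matched objects is independent. -/
def IsConstrained {A O : Type*} (adj : A → O → Prop) (Mat : Matroid O)
    (M : A → Option O) : Prop :=
  IsMatching adj M ∧ Mat.Indep (matchedObjs M)

/-- The fundamental circuit `C(X, o)` of `o` with respect to a basis `X`. -/
noncomputable def fundCircuit {O : Type*} (Mat : Matroid O) (X : Set O) (o : O) : Set O :=
  if o ∈ X then {o} else {x ∈ X | Mat.Indep (insert o (X \ {x}))}

/-- The exchange graph `D_{N→M}` on the agents, for fully matched matchings given by
`m n : A → O`: there is an arc `(a, b)` whenever `M(b) ∈ C(M(A), N(a))`. -/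
def exchArc {A O : Type*} (Mat : Matroid O) (m n : A → O) (a b : A) : Prop :=
  m b ∈ fundCircuit Mat (Set.range m) (n a)

/-- A directed path from `s` to `t`, given as a nonempty list of pairwise distinct
nodes with arcs between consecutive nodes, starting at `s` and ending at `t`. -/
def IsPath {V : Type*} (arc : V → V → Prop) (p : List V) (s t : V) : Prop :=
  p ≠ [] ∧ p.Nodup ∧ p.Chain' arc ∧ p.head? = some s ∧ p.getLast? = some t

section Helpers
variable {O : Type*}


lemma mem_closure_diff_union (Mat : Matroid O) {X : Set O} (hX : Mat.Indep X) {y : O}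
    {S T : Set O} (hS : y ∈ Mat.closure (X \ S)) (hT : y ∈ Mat.closure (X \ T)) :
    y ∈ Mat.closure (X \ (S ∪ T)) := by
  have h1 : Mat.Indep ((X \ S) ∪ (X \ T)) := hX.subset (by intro z hz; rcases hz with h|h <;> exact h.1)
  have := h1.closure_inter_eq_inter_closure
  rw [Set.diff_inter_diff] at this
  rw [this]
  exact ⟨hS, hT⟩

/-- The set of values `x j` for `lo ≤ j < hi`. -/
def xset (x : ℕ → O) (lo hi : ℕ) : Set O := {o | ∃ j, lo ≤ j ∧ j < hi ∧ x j = o}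

lemma xset_empty_of_le (x : ℕ → O) {lo hi : ℕ} (h : hi ≤ lo) : xset x lo hi = ∅ := by
  ext o; simp only [xset, Set.mem_setOf_eq, Set.mem_empty_iff_false, iff_false]
  rintro ⟨j, h1, h2, _⟩; omega

lemma xset_succ (x : ℕ → O) {lo hi : ℕ} (h : lo ≤ hi) :
    xset x lo (hi + 1) = insert (x hi) (xset x lo hi) := by
  ext o
  simp only [xset, Set.mem_setOf_eq, Set.mem_insert_iff]
  constructor
  · rintro ⟨j, h1, h2, rfl⟩
    rcases Nat.lt_or_ge j hi with h'|h'
    · exact Or.inr ⟨j, h1, h', rfl⟩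
    · left; congr 1; omega
  · rintro (rfl | ⟨j, h1, h2, rfl⟩)
    · exact ⟨hi, h, by omega, rfl⟩
    · exact ⟨j, h1, by omega, rfl⟩

lemma xset_mono (x : ℕ → O) {lo lo' hi hi' : ℕ} (h1 : lo ≤ lo') (h2 : hi' ≤ hi) :
    xset x lo' hi' ⊆ xset x lo hi := by
  rintro o ⟨j, ha, hb, rfl⟩; exact ⟨j, by omega, by omega, rfl⟩

lemma mem_xset {x : ℕ → O} {lo hi j : ℕ} (h1 : lo ≤ j) (h2 : j < hi) : x j ∈ xset x lo hi :=
  ⟨j, h1, h2, rfl⟩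

lemma mem_closure_diff_xset (Mat : Matroid O) (hE : Mat.E = Set.univ) {X : Set O}
    (hX : Mat.IsBase X) (x : ℕ → O) {y : O} (lo : ℕ) :
    ∀ (hi : ℕ), (∀ j, lo ≤ j → j < hi → y ∈ Mat.closure (X \ {x j})) →
      y ∈ Mat.closure (X \ xset x lo hi) := by
  intro hi
  induction hi with
  | zero =>
    intro _
    rw [xset_empty_of_le x (Nat.zero_le lo), Set.diff_empty, hX.closure_eq, hE]
    exact Set.mem_univ y
  | succ k ih =>
    intro h
    rcases Nat.lt_or_ge k lo with hk | hk
    · rw [xset_empty_of_le x (by omega), Set.diff_empty, hX.closure_eq, hE]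
      exact Set.mem_univ y
    · rw [xset_succ x hk]
      have h1 := ih (fun j hj1 hj2 => h j hj1 (by omega))
      have h2 := h k hk (by omega)
      have := mem_closure_diff_union Mat hX.indep h2 h1
      rwa [Set.singleton_union] at this

lemma xset_cons (x : ℕ → O) {lo hi : ℕ} (h : lo < hi) :
    xset x lo hi = insert (x lo) (xset x (lo + 1) hi) := by
  ext o
  simp only [xset, Set.mem_setOf_eq, Set.mem_insert_iff]
  constructor
  · rintro ⟨j, h1, h2, rfl⟩
    rcases Nat.eq_or_lt_of_le h1 with h' | h'
    · left; rw [h']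
    · exact Or.inr ⟨j, by omega, h2, rfl⟩
  · rintro (rfl | ⟨j, h1, h2, rfl⟩)
    · exact ⟨lo, le_rfl, h, rfl⟩
    · exact ⟨j, by omega, h2, rfl⟩

lemma xset_shift (x : ℕ → O) (lo hi : ℕ) :
    xset (fun j => x (j + 1)) lo hi = xset x (lo + 1) (hi + 1) := by
  ext o
  simp only [xset, Set.mem_setOf_eq]
  constructor
  · rintro ⟨j, h1, h2, rfl⟩; exact ⟨j + 1, by omega, by omega, rfl⟩
  · rintro ⟨j, h1, h2, rfl⟩
    refine ⟨j - 1, by omega, by omega, by rw [Nat.sub_add_cancel (by omega)]⟩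

lemma core_exchange (Mat : Matroid O) (hE : Mat.E = Set.univ) :
    ∀ (t : ℕ) (X : Set O) (x y : ℕ → O), Mat.IsBase X →
      (∀ i, i < t → x i ∈ X) →
      (∀ i j, i < j → j < t → x i ≠ x j) →
      (∀ i j, i < j → j < t → y i ≠ y j) →
      (∀ i, i < t → y i ∈ X → x i = y i) →
      (∀ i, i < t → y i ∈ Mat.closure (X \ xset x (i + 1) t)) →
      (∀ i, i < t → y i ∉ Mat.closure (X \ xset x i t)) →
      Mat.Indep ((X \ xset x 0 t) ∪ {o | ∃ j, j < t ∧ y j = o}) := by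
  intro t
  induction t with
  | zero =>
    intro X x y hX _ _ _ _ _ _
    have : (X \ xset x 0 0) ∪ {o | ∃ j, j < 0 ∧ y j = o} = X := by
      rw [xset_empty_of_le x le_rfl]
      ext o; simp
    rw [this]; exact hX.indep
  | succ t ih =>
    intro X x y hX hxX hxinj hyinj hC hA hB
    have ht0 : 0 < t + 1 := Nat.succ_pos t
    have hy0A : y 0 ∈ Mat.closure (X \ xset x 1 (t + 1)) := hA 0 ht0
    have hy0B : y 0 ∉ Mat.closure (X \ xset x 0 (t + 1)) := hB 0 ht0
    have hx0X : x 0 ∈ X := hxX 0 ht0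
    have hsubE : ∀ (S : Set O), S ⊆ Mat.E := by intro S; rw [hE]; exact Set.subset_univ S
    set X1 : Set O := insert (y 0) (X \ {x 0}) with hX1def
    -- X1 is a base
    have hX1 : Mat.IsBase X1 := by
      by_cases hy0 : y 0 ∈ X
      · have hx0y0 : x 0 = y 0 := hC 0 ht0 hy0
        have : X1 = X := by
          rw [hX1def, ← hx0y0, Set.insert_diff_singleton, Set.insert_eq_self.mpr hx0X]
        rw [this]; exact hX
      · have hkey : y 0 ∉ Mat.closure (X \ {x 0}) := by
          intro hcon
          have := mem_closure_diff_union Mat hX.indep hcon hy0A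
          have heq : ({x 0} : Set O) ∪ xset x 1 (t + 1) = xset x 0 (t + 1) := by
            rw [xset_cons x ht0, Set.singleton_union]
          rw [heq] at this
          exact hy0B this
        have hind : Mat.Indep (insert (y 0) (X \ {x 0})) := by
          refine ((hX.indep.subset Set.diff_subset).insert_indep_iff_of_notMem ?_).mpr ?_
          · intro h; exact hy0 h.1
          · exact ⟨by rw [hE]; trivial, hkey⟩
        exact hX.exchange_isBase_of_indep hy0 hind
    -- x 0 is in the closure of the residual set plus y 0
    have hx0cl : x 0 ∈ Mat.closure (insert (y 0) (X \ xset x 0 (t + 1))) := by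
      by_cases hy0 : y 0 ∈ X
      · have hx0y0 : x 0 = y 0 := hC 0 ht0 hy0
        rw [hx0y0]
        exact Mat.mem_closure_of_mem (Set.mem_insert _ _) (hsubE _)
      · refine Matroid.mem_closure_insert hy0B ?_
        refine Mat.closure_subset_closure ?_ hy0A
        intro z hz
        rcases eq_or_ne z (x 0) with rfl | hne
        · exact Set.mem_insert _ _
        · refine Set.mem_insert_of_mem _ ⟨hz.1, ?_⟩
          rw [xset_cons x ht0]
          rintro (h | h)
          · exact hne h
          · exact hz.2 h
    -- apply the induction hypothesis
    have hIH := ih X1 (fun j => x (j + 1)) (fun j => y (j + 1)) hX1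
      (by
        intro i hi
        refine Set.mem_insert_of_mem _ ⟨hxX (i + 1) (by omega), ?_⟩
        simp only [Set.mem_singleton_iff]
        exact (hxinj 0 (i + 1) (by omega) (by omega)).symm)
      (fun i j hij hj => hxinj (i + 1) (j + 1) (by omega) (by omega))
      (fun i j hij hj => hyinj (i + 1) (j + 1) (by omega) (by omega))
      (by
        intro i hi hmem
        rcases hmem with h | h
        · exact absurd h.symm (hyinj 0 (i + 1) (by omega) (by omega))
        · exact hC (i + 1) (by omega) h.1)
      (by
        intro i hi
        rw [xset_shift]
        have hAi := hA (i + 1) (by omega)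
        refine Matroid.closure_subset_closure_of_subset_closure ?_ hAi
        intro z hz
        rcases eq_or_ne z (x 0) with rfl | hne
        · refine Matroid.closure_subset_closure Mat ?_ hx0cl
          intro w hw
          rcases hw with rfl | hw
          · refine ⟨Set.mem_insert _ _, ?_⟩
            rintro ⟨j, hj1, hj2, hj3⟩
            by_cases hy0 : y 0 ∈ X
            · exact hxinj 0 j (by omega) hj2 (by rw [hC 0 ht0 hy0, hj3])
            · exact hy0 (hj3 ▸ hxX j hj2)
          · refine ⟨Set.mem_insert_of_mem _ ⟨hw.1, ?_⟩, ?_⟩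
            · simp only [Set.mem_singleton_iff]
              intro h
              exact hw.2 (h ▸ mem_xset (le_rfl) ht0)
            · intro h
              exact hw.2 (xset_mono x (by omega) le_rfl h)
        · refine Mat.mem_closure_of_mem ?_ (hsubE _)
          refine ⟨Set.mem_insert_of_mem _ ⟨hz.1, by simpa using hne⟩, hz.2⟩)
      (by
        intro i hi
        rw [xset_shift]
        have hBi := hB (i + 1) (by omega)
        intro hcon
        refine hBi ?_
        have hsub : Mat.closure (X1 \ xset x (i + 1) (t + 1)) ⊆
            Mat.closure (X \ xset x (i + 1) (t + 1)) := by
          have h1 : X1 \ xset x (i + 1) (t + 1) ⊆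
              insert (y 0) (X \ xset x (i + 1) (t + 1)) := by
            rintro z ⟨hz1, hz2⟩
            rcases hz1 with rfl | hz1
            · exact Set.mem_insert _ _
            · exact Set.mem_insert_of_mem _ ⟨hz1.1, hz2⟩
          have h2 : y 0 ∈ Mat.closure (X \ xset x (i + 1) (t + 1)) := by
            refine Matroid.closure_subset_closure Mat ?_ hy0A
            exact Set.diff_subset_diff_right (xset_mono x (by omega) le_rfl)
          calc Mat.closure (X1 \ xset x (i + 1) (t + 1))
              ⊆ Mat.closure (insert (y 0) (X \ xset x (i + 1) (t + 1))) :=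
                Matroid.closure_subset_closure Mat h1
            _ = Mat.closure (X \ xset x (i + 1) (t + 1)) :=
                Matroid.closure_insert_eq_of_mem_closure h2
        exact hsub hcon)
    -- conclude
    refine hIH.subset ?_
    rintro o (ho | ⟨j, hj, rfl⟩)
    · refine Set.mem_union_left _ ⟨?_, ?_⟩
      · refine Set.mem_insert_of_mem _ ⟨ho.1, ?_⟩
        simp only [Set.mem_singleton_iff]
        intro h
        exact ho.2 (h ▸ mem_xset le_rfl ht0)
      · rw [xset_shift]
        intro h
        exact ho.2 (xset_mono x (by omega) le_rfl h)
    · rcases Nat.eq_zero_or_pos j with rfl | hj0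
      · refine Set.mem_union_left _ ⟨Set.mem_insert _ _, ?_⟩
        rw [xset_shift]
        rintro ⟨i, hi1, hi2, hi3⟩
        by_cases hy0 : y 0 ∈ X
        · exact hxinj 0 i (by omega) hi2 (by rw [hC 0 ht0 hy0, hi3])
        · exact hy0 (hi3 ▸ hxX i hi2)
      · refine Set.mem_union_right _ ⟨j - 1, by omega, ?_⟩
        rw [Nat.sub_add_cancel (by omega)]

lemma exists_min_path {V : Type*} (arc : V → V → Prop) (p : List V) (a' b' : V)
    (hp : IsPath arc p a' b') :
    ∃ q : List V, IsPath arc q a' b' ∧ (∀ x ∈ q, x ∈ p) ∧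
      ∀ i j, j < q.length → i + 2 ≤ j → ¬ arc (q.getD i a') (q.getD j a') := by
  have hex : ∃ L : ℕ, ∃ q : List V, (IsPath arc q a' b' ∧ ∀ x ∈ q, x ∈ p) ∧ q.length = L :=
    ⟨p.length, p, ⟨hp, fun x hx => hx⟩, rfl⟩
  classical
  obtain ⟨q, ⟨hq, hqp⟩, hqlen⟩ := Nat.find_spec hex
  refine ⟨q, hq, hqp, ?_⟩
  intro i j hj hij harc
  -- build a shorter path and contradict minimality
  have hgd : ∀ k (h : k < q.length), q.getD k a' = q[k] := by
    intro k h
    simp [List.getD_eq_getElem?_getD, List.getElem?_eq_getElem h]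
  have hi : i < q.length := by omega
  rw [hgd i hi, hgd j hj] at harc
  set q' : List V := q.take (i + 1) ++ q.drop j with hq'def
  have htake_ne : q.take (i + 1) ≠ [] := by
    have : (q.take (i + 1)).length = i + 1 := by
      rw [List.length_take]; omega
    intro h; rw [h] at this; simp at this
  have hdrop_ne : q.drop j ≠ [] := by
    have : (q.drop j).length = q.length - j := by rw [List.length_drop]
    intro h; rw [h] at this; simp at this; omega
  have hsub : List.Sublist q' q := by
    have h1 : List.Sublist (q.drop j) (q.drop (i + 1)) := List.drop_sublist_drop_left q (by omega)
    have h2 : List.Sublist q' (q.take (i + 1) ++ q.drop (i + 1)) := h1.append_left _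
    rwa [List.take_append_drop] at h2
  have hq'path : IsPath arc q' a' b' := by
    refine ⟨by simp [hq'def, htake_ne], hq.2.1.sublist hsub, ?_, ?_, ?_⟩
    · rw [hq'def]; change List.IsChain arc _; rw [List.isChain_append]
      refine ⟨hq.2.2.1.prefix (q.take_prefix _), hq.2.2.1.drop _, ?_⟩
      intro x hx y hy
      rw [List.getLast?_take] at hx
      simp only [Nat.add_sub_cancel, if_neg (Nat.succ_ne_zero i),
        List.getElem?_eq_getElem hi, Option.some_or, Option.mem_def,
        Option.some.injEq] at hx
      rw [List.head?_drop] at hy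
      simp only [List.getElem?_eq_getElem hj, Option.mem_def, Option.some.injEq] at hy
      rw [← hx, ← hy]
      exact harc
    · rw [hq'def, List.head?_append_of_ne_nil _ htake_ne, List.head?_take]
      rw [if_neg (Nat.succ_ne_zero i)]
      exact hq.2.2.2.1
    · rw [hq'def, List.getLast?_append]
      have : (q.drop j).getLast? = q.getLast? := by
        rw [List.getLast?_eq_getElem?, List.getLast?_eq_getElem?, List.length_drop,
          List.getElem?_drop]
        congr 1
        omega
      rw [this, hq.2.2.2.2]
      simp
  have hq'p : ∀ x ∈ q', x ∈ p := fun x hx => hqp x (hsub.mem hx)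
  have hq'len : q'.length < q.length := by
    rw [hq'def, List.length_append, List.length_take, List.length_drop]
    omega
  have := Nat.find_min' hex ⟨q', ⟨hq'path, hq'p⟩, rfl⟩
  omega

end Helpers

/-- Given two everywhere-matched `ℐ`-constrained matchings `m`, `n`
whose matched object sets are bases, and a directed path `p` from `a'` to `b'` in the
exchange graph `D_{N→M}`, there is a subset `A'` of the agents on `p` containing `a'`
and `b'` such that reassigning the agents of `A' \ {b'}` to their objects under `n`
and leaving `b'` unmatched yields an `ℐ`-constrained matching. -/
theorem exchange_along_path
    {A O : Type*} [Fintype A] [Fintype O]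
    (adj : A → O → Prop)
    (Mat : Matroid O) (hE : Mat.E = Set.univ)
    (m n : A → O)
    (hm : IsConstrained adj Mat (fun a => some (m a)))
    (hn : IsConstrained adj Mat (fun a => some (n a)))
    (hmB : Mat.IsBase (Set.range m)) (hnB : Mat.IsBase (Set.range n))
    (p : List A) (a' b' : A) (hp : IsPath (exchArc Mat m n) p a' b') :
    ∃ A' : Set A, A' ⊆ {a : A | a ∈ p} ∧ a' ∈ A' ∧ b' ∈ A' ∧
      IsConstrained adj Mat
        (fun a => if a = b' then none
          else if a ∈ A' then some (n a) else some (m a)) := by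
  classical
  obtain ⟨hmMatch, -⟩ := hm
  obtain ⟨hnMatch, -⟩ := hn
  have hmInj : Function.Injective m := by
    intro a b h
    exact hmMatch.2 a b (m a) rfl (by rw [h])
  have hnInj : Function.Injective n := by
    intro a b h
    exact hnMatch.2 a b (n a) rfl (by rw [h])
  set X : Set O := Set.range m with hXdef
  have hsubE : ∀ S : Set O, S ⊆ Mat.E := fun S => by rw [hE]; exact Set.subset_univ S
  obtain ⟨q, hq, hqp, hshort⟩ := exists_min_path (exchArc Mat m n) p a' b' hp
  set len := q.length with hlendef
  have hlen : 0 < len := List.length_pos_iff.mpr hq.1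
  set t := len - 1 with htdef
  set qd : ℕ → A := fun i => q.getD i a' with hqddef
  have hgd : ∀ k, (h : k < len) → qd k = q[k] := by
    intro k h
    simp [hqddef, List.getD_eq_getElem?_getD, List.getElem?_eq_getElem h]
  have hqmem : ∀ k, (h : k < len) → qd k ∈ q := by
    intro k h; rw [hgd k h]; exact List.getElem_mem _
  have hidx : ∀ a ∈ q, ∃ i, ∃ h : i < len, qd i = a := by
    intro a ha
    obtain ⟨i, h, hia⟩ := List.mem_iff_getElem.mp ha
    exact ⟨i, h, by rw [hgd i h]; exact hia⟩
  have hinj : ∀ i j, i < len → j < len → qd i = qd j → i = j := by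
    intro i j hi hj hij
    rw [hgd i hi, hgd j hj] at hij
    exact (hq.2.1.getElem_inj_iff).mp hij
  have hhead : qd 0 = a' := by
    have h0 := hq.2.2.2.1
    rw [List.head?_eq_getElem?, List.getElem?_eq_getElem hlen] at h0
    rw [hgd 0 hlen]
    exact Option.some_injective _ h0
  have hlast : qd t = b' := by
    have h0 := hq.2.2.2.2
    rw [List.getLast?_eq_getElem?,
      List.getElem?_eq_getElem (show len - 1 < len by omega)] at h0
    rw [hgd t (by omega)]
    exact Option.some_injective _ h0
  have harc : ∀ i, i < t → exchArc Mat m n (qd i) (qd (i + 1)) := by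
    intro i hi
    have h := List.isChain_iff_getElem.mp hq.2.2.1 i (by omega)
    rw [hgd i (by omega), hgd (i + 1) (by omega)]
    simpa [List.get_eq_getElem] using h
  -- fundamental-circuit facts
  have hfc1 : ∀ u v : A, exchArc Mat m n u v → n u ∈ X → m v = n u := by
    intro u v h hmem
    unfold exchArc fundCircuit at h
    rw [if_pos hmem] at h
    exact h
  have hfc2 : ∀ u v : A, exchArc Mat m n u v → n u ∉ X →
      Mat.Indep (insert (n u) (X \ {m v})) := by
    intro u v h hmem
    unfold exchArc fundCircuit at h
    rw [if_neg hmem] at h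
    exact h.2
  have hnc : ∀ u v : A, ¬ exchArc Mat m n u v → n u ∈ Mat.closure (X \ {m v}) := by
    intro u v h
    by_cases hmem : n u ∈ X
    · refine Mat.mem_closure_of_mem ⟨hmem, ?_⟩ (hsubE _)
      intro hc
      apply h
      unfold exchArc fundCircuit
      rw [if_pos hmem]
      simp only [Set.mem_singleton_iff] at hc ⊢
      exact hc.symm
    · have hind : ¬ Mat.Indep (insert (n u) (X \ {m v})) := by
        intro hc
        exact h (by unfold exchArc fundCircuit; rw [if_neg hmem]; exact ⟨⟨v, rfl⟩, hc⟩)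
      have hIndep : Mat.Indep (X \ {m v}) := hmB.indep.subset Set.diff_subset
      have hnotmem : n u ∉ X \ {m v} := fun hc => hmem hc.1
      by_contra hcl
      exact hind ((hIndep.insert_indep_iff_of_notMem hnotmem).mpr
        ⟨by rw [hE]; trivial, hcl⟩)
  set x : ℕ → O := fun i => m (qd (i + 1)) with hxdef
  set y : ℕ → O := fun i => n (qd i) with hydef
  have hxX : ∀ i, i < t → x i ∈ X := fun i _ => ⟨qd (i + 1), rfl⟩
  have hxinj : ∀ i j, i < j → j < t → x i ≠ x j := by
    intro i j hij hj hc
    have := hinj (i + 1) (j + 1) (by omega) (by omega) (hmInj hc)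
    omega
  have hyinj : ∀ i j, i < j → j < t → y i ≠ y j := by
    intro i j hij hj hc
    have := hinj i j (by omega) (by omega) (hnInj hc)
    omega
  have hC : ∀ i, i < t → y i ∈ X → x i = y i := fun i hi => hfc1 _ _ (harc i hi)
  have hyA : ∀ i, i < t → y i ∈ Mat.closure (X \ xset x (i + 1) t) := by
    intro i hi
    refine mem_closure_diff_xset Mat hE hmB x (i + 1) t ?_
    intro j hj1 hj2
    exact hnc (qd i) (qd (j + 1)) (hshort i (j + 1) (by omega) (by omega))
  have hyB : ∀ i, i < t → y i ∉ Mat.closure (X \ xset x i t) := by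
    intro i hi
    have ha := harc i hi
    have hxsub : X \ xset x i t ⊆ X \ {x i} :=
      Set.diff_subset_diff_right (by
        intro o ho
        rw [Set.mem_singleton_iff] at ho
        exact ho ▸ mem_xset le_rfl hi)
    by_cases hyi : y i ∈ X
    · have hxy : x i = y i := hfc1 _ _ ha hyi
      intro hc
      refine hmB.indep.notMem_closure_diff_of_mem hyi ?_
      refine Mat.closure_subset_closure ?_ hc
      rw [← hxy]
      exact hxsub
    · have hind := hfc2 _ _ ha hyi
      have hIndep : Mat.Indep (X \ {x i}) := hmB.indep.subset Set.diff_subset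
      have hnm : y i ∉ X \ {x i} := fun hc => hyi hc.1
      have h2 := ((hIndep.insert_indep_iff_of_notMem hnm).mp hind).2
      intro hc
      exact h2 (Mat.closure_subset_closure hxsub hc)
  have hZ := core_exchange Mat hE t X x y hmB hxX hxinj hyinj hC hyA hyB
  have hkey : ∀ a ∈ q, a ≠ b' → ∀ c, n a = m c → c ∈ q := by
    intro a ha hab c hc
    obtain ⟨i, hilen, rfl⟩ := hidx a ha
    have hit : i ≠ t := fun h => hab (by rw [h, hlast])
    have hi : i < t := by omega
    have hnaX : n (qd i) ∈ X := ⟨c, hc.symm⟩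
    have h1 := hfc1 _ _ (harc i hi) hnaX
    have h2 : m (qd (i + 1)) = m c := by rw [h1, hc]
    rw [← hmInj h2]
    exact hqmem (i + 1) (by omega)
  refine ⟨{a | a ∈ q}, fun a ha => hqp a ha, hhead ▸ hqmem 0 hlen,
    hlast ▸ hqmem t (by omega), ?_, ?_⟩
  · constructor
    · intro a o ho
      beta_reduce at ho
      by_cases hab : a = b'
      · rw [if_pos hab] at ho; exact absurd ho (by simp)
      rw [if_neg hab] at ho
      by_cases haq : a ∈ ({a : A | a ∈ q} : Set A)
      · rw [if_pos haq] at ho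
        exact hnMatch.1 a o ho
      · rw [if_neg haq] at ho
        exact hmMatch.1 a o ho
    · intro a c o h1 h2
      beta_reduce at h1 h2
      by_cases hab : a = b'
      · rw [if_pos hab] at h1; exact absurd h1 (by simp)
      rw [if_neg hab] at h1
      by_cases hcb : c = b'
      · rw [if_pos hcb] at h2; exact absurd h2 (by simp)
      rw [if_neg hcb] at h2
      by_cases haq : a ∈ ({a : A | a ∈ q} : Set A) <;> by_cases hcq : c ∈ ({a : A | a ∈ q} : Set A)
      · rw [if_pos haq] at h1; rw [if_pos hcq] at h2
        have : n a = n c := by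
          have e1 : n a = o := Option.some_injective _ h1
          have e2 : n c = o := Option.some_injective _ h2
          rw [e1, e2]
        exact hnInj this
      · rw [if_pos haq] at h1; rw [if_neg hcq] at h2
        exfalso
        refine hcq (hkey a haq hab c ?_)
        have e1 : n a = o := Option.some_injective _ h1
        have e2 : m c = o := Option.some_injective _ h2
        rw [e1, e2]
      · rw [if_neg haq] at h1; rw [if_pos hcq] at h2
        exfalso
        refine haq (hkey c hcq hcb a ?_)
        have e1 : m a = o := Option.some_injective _ h1
        have e2 : n c = o := Option.some_injective _ h2
        rw [e1, e2]
      · rw [if_neg haq] at h1; rw [if_neg hcq] at h2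
        have : m a = m c := by
          have e1 : m a = o := Option.some_injective _ h1
          have e2 : m c = o := Option.some_injective _ h2
          rw [e1, e2]
        exact hmInj this
  · refine hZ.subset ?_
    rintro o ⟨a, ha⟩
    beta_reduce at ha
    by_cases hab : a = b'
    · rw [if_pos hab] at ha; exact absurd ha (by simp)
    rw [if_neg hab] at ha
    by_cases haq : a ∈ ({a : A | a ∈ q} : Set A)
    · rw [if_pos haq] at ha
      obtain ⟨i, hilen, rfl⟩ := hidx a haq
      have hit : i ≠ t := fun h => hab (by rw [h, hlast])
      have hi : i < t := by omega
      refine Set.mem_union_right _ ⟨i, hi, ?_⟩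
      exact Option.some_injective _ ha
    · rw [if_neg haq] at ha
      have e1 : m a = o := Option.some_injective _ ha
      refine Set.mem_union_left _ ⟨e1 ▸ ⟨a, rfl⟩, ?_⟩
      rintro ⟨j, -, hj, hxj⟩
      have hxja : x j = m a := by rw [hxj, e1]
      have : qd (j + 1) = a := hmInj hxja
      exact haq (this ▸ hqmem (j + 1) (by omega))
end

section
/- Let ℐ be a matroid on the object set O, and let M, N be two ℐ-constrained matchings in a matching instance such that every agent is matched in both M and N and both M(A) and N(A) are bases of ℐ. Let P₁, …, P_ℓ be node-disjoint directed paths in the exchange graph D_{N→M}, where Pᵢ is a path from aᵢ to bᵢ, and assume that there is no arc of D_{N→M} from a node of Pᵢ to a node of Pⱼ for any i > j. Then there exists A' ⊆ ⋃ᵢ A(Pᵢ) with a₁, …, a_ℓ, b₁, …, b_ℓ ∈ A' such that the assignment M' defined by M'(a) = M(a) for a ∈ A \ A', M'(a) = N(a) for a ∈ A' \ {b₁, …, b_ℓ}, and M'(bᵢ) = ∅ (each bᵢ unmatched) for i ∈ [ℓ], is an ℐ-constrained matching. -/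
open scoped Classical

open scoped Classical

section ListAux

variable {A : Type*} (arc : A → A → Prop)

noncomputable def jumpL (v : A) : List A → List A
  | [] => []
  | u :: rest => if ∃ z ∈ rest, arc v z then jumpL v rest else u :: rest

lemma jumpL_suffix (v : A) : ∀ l : List A, jumpL arc v l <:+ l
  | [] => List.nil_suffix
  | u :: rest => by
    rw [jumpL]
    split
    · exact (jumpL_suffix v rest).trans (List.suffix_cons u rest)
    · exact List.suffix_rfl

lemma jumpL_length (v : A) (l : List A) : (jumpL arc v l).length ≤ l.length :=
  (jumpL_suffix arc v l).length_le

lemma jumpL_spec (v : A) : ∀ (l : List A), (∃ z ∈ l, arc v z) →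
    ∃ u rest, jumpL arc v l = u :: rest ∧ arc v u ∧ ∀ z ∈ rest, ¬ arc v z
  | [], h => by simp at h
  | u :: rest, h => by
    rw [jumpL]
    split
    · next hex => exact jumpL_spec v rest hex
    · next hex =>
      push_neg at hex
      refine ⟨u, rest, rfl, ?_, hex⟩
      obtain ⟨z, hz, hvz⟩ := h
      rcases List.mem_cons.1 hz with rfl | hz
      · exact hvz
      · exact absurd hvz (hex z hz)

noncomputable def chosenL : List A → List A
  | [] => []
  | v :: l => v :: chosenL (jumpL arc v l)
termination_by l => l.length
decreasing_by
  simp_wf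
  exact jumpL_length arc _ _

lemma chosenL_nil : chosenL arc [] = [] := by rw [chosenL]

lemma chosenL_cons (v : A) (l : List A) :
    chosenL arc (v :: l) = v :: chosenL arc (jumpL arc v l) := by rw [chosenL]

lemma chosenL_sublist (l : List A) : List.Sublist (chosenL arc l) l := by
  induction l using chosenL.induct arc with
  | case1 => simp [chosenL_nil]
  | case2 v l ih =>
    rw [chosenL_cons]
    exact (ih.trans (jumpL_suffix arc v l).sublist).cons₂ v

lemma chosenL_head? (l : List A) : (chosenL arc l).head? = l.head? := by
  cases l with
  | nil => simp [chosenL_nil]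
  | cons v l => rw [chosenL_cons]; rfl

lemma suffix_getLast? {s l : List A} (h : s <:+ l) (hs : s ≠ []) :
    s.getLast? = l.getLast? := by
  obtain ⟨t, rfl⟩ := h
  rw [List.getLast?_append_of_ne_nil _ hs]

lemma chosenL_ne_nil {l : List A} (h : l ≠ []) : chosenL arc l ≠ [] := by
  cases l with
  | nil => exact absurd rfl h
  | cons v l => rw [chosenL_cons]; simp

lemma chosenL_getLast? (l : List A) (hc : l.Chain' arc) :
    (chosenL arc l).getLast? = l.getLast? := by
  induction l using chosenL.induct arc with
  | case1 => simp [chosenL_nil]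
  | case2 v l ih =>
    rw [chosenL_cons]
    rcases l with _ | ⟨u0, t⟩
    · simp [jumpL, chosenL_nil]
    · have harc : arc v u0 := (List.isChain_cons_cons.1 hc).1
      have hchl : (u0 :: t).Chain' arc := (List.isChain_cons_cons.1 hc).2
      obtain ⟨u, rest, hj, hvu, hno⟩ := jumpL_spec arc v (u0 :: t) ⟨u0, by simp, harc⟩
      have hsuff := jumpL_suffix arc v (u0 :: t)
      rw [hj] at hsuff
      have hne : chosenL arc (jumpL arc v (u0 :: t)) ≠ [] :=
        chosenL_ne_nil arc (by rw [hj]; simp)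
      calc (v :: chosenL arc (jumpL arc v (u0 :: t))).getLast?
          = (chosenL arc (jumpL arc v (u0 :: t))).getLast? := by
            rcases hx : chosenL arc (jumpL arc v (u0 :: t)) with _ | ⟨a, s⟩
            · exact absurd hx hne
            · simp
        _ = (jumpL arc v (u0 :: t)).getLast? := ih (by rw [hj]; exact hchl.suffix hsuff)
        _ = (u0 :: t).getLast? := by rw [hj]; exact suffix_getLast? hsuff (by simp)

lemma chosenL_chain' (l : List A) (hc : l.Chain' arc) : (chosenL arc l).Chain' arc := by
  induction l using chosenL.induct arc with
  | case1 => simpa [chosenL_nil] using hc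
  | case2 v l ih =>
    rw [chosenL_cons]
    rcases l with _ | ⟨u0, t⟩
    · simpa [jumpL, chosenL_nil] using hc
    · have harc : arc v u0 := (List.isChain_cons_cons.1 hc).1
      have hchl : (u0 :: t).Chain' arc := (List.isChain_cons_cons.1 hc).2
      obtain ⟨u, rest, hj, hvu, hno⟩ := jumpL_spec arc v (u0 :: t) ⟨u0, by simp, harc⟩
      have hsuff := jumpL_suffix arc v (u0 :: t); rw [hj] at hsuff
      have hrec := ih (by rw [hj]; exact hchl.suffix hsuff)
      rw [hj] at hrec ⊢
      rw [chosenL_cons] at hrec ⊢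
      exact List.isChain_cons_cons.2 ⟨hvu, hrec⟩

/-- the key "no skipping arcs" property of the greedy subsequence. -/
lemma chosenL_pairwise (l : List A) (hc : l.Chain' arc) :
    ((chosenL arc l).zip (chosenL arc l).tail).Pairwise
      (fun p q : A × A => ¬ arc p.1 q.2) := by
  induction l using chosenL.induct arc with
  | case1 => simp [chosenL_nil]
  | case2 v l ih =>
    rw [chosenL_cons]
    rcases l with _ | ⟨u0, t⟩
    · simp [jumpL, chosenL_nil]
    · have harc : arc v u0 := (List.isChain_cons_cons.1 hc).1
      have hchl : (u0 :: t).Chain' arc := (List.isChain_cons_cons.1 hc).2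
      obtain ⟨u, rest, hj, hvu, hno⟩ := jumpL_spec arc v (u0 :: t) ⟨u0, by simp, harc⟩
      have hsuff := jumpL_suffix arc v (u0 :: t); rw [hj] at hsuff
      have hrec := ih (by rw [hj]; exact hchl.suffix hsuff)
      rw [hj] at hrec ⊢
      rw [chosenL_cons] at hrec ⊢
      set w'' := chosenL arc (jumpL arc u rest) with hw''
      -- goal : ((v :: u :: w'').zip (u :: w'')).Pairwise _
      have hzip : (v :: u :: w'').zip ((v :: u :: w'').tail)
          = (v, u) :: ((u :: w'').zip w'') := rfl
      rw [hzip]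
      refine List.Pairwise.cons ?_ hrec
      intro q hq
      have hq2 : q.2 ∈ w'' := by
        obtain ⟨q1, q2⟩ := q
        have := List.of_mem_zip (by simpa using hq)
        exact this.2
      have hq2rest : q.2 ∈ rest := by
        have h1 : w'' ⊆ jumpL arc u rest := (chosenL_sublist arc _).subset
        have h2 : jumpL arc u rest ⊆ rest := (jumpL_suffix arc u rest).sublist.subset
        exact h2 (h1 hq2)
      exact hno q.2 hq2rest

end ListAux
section ZipAux

variable {A : Type*}

lemma zip_tail_mem : ∀ {w : List A} {p : A × A}, p ∈ w.zip w.tail →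
    p.1 ∈ w.dropLast ∧ p.2 ∈ w.tail
  | [], p, h => by simp at h
  | [a], p, h => by simp at h
  | a :: b :: t, p, h => by
    have h' : p = (a, b) ∨ p ∈ (b :: t).zip (b :: t).tail := by
      exact (List.mem_cons).1 h
    rcases h' with rfl | h'
    · exact ⟨by simp, by simp⟩
    · have := zip_tail_mem h'
      refine ⟨?_, ?_⟩
      · rw [List.dropLast_cons₂]
        exact List.mem_cons_of_mem a this.1
      · exact List.mem_cons_of_mem b this.2

lemma chain'_zip {arc : A → A → Prop} : ∀ {w : List A}, w.Chain' arc →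
    ∀ p ∈ w.zip w.tail, arc p.1 p.2
  | [], _, p, h => by simp at h
  | [a], _, p, h => by simp at h
  | a :: b :: t, hc, p, h => by
    have h' : p = (a, b) ∨ p ∈ (b :: t).zip (b :: t).tail := by
      exact (List.mem_cons).1 h
    rcases h' with rfl | h'
    · exact (List.isChain_cons_cons.1 hc).1
    · exact chain'_zip (List.isChain_cons_cons.1 hc).2 p h'

lemma mem_tail_exists_zip : ∀ {w : List A} {a : A}, a ∈ w.tail →
    ∃ b, (b, a) ∈ w.zip w.tail
  | [], a, h => by simp at h
  | [x], a, h => by simp at h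
  | x :: y :: t, a, h => by
    rcases List.mem_cons.1 h with rfl | h'
    · exact ⟨x, by simp⟩
    · obtain ⟨b, hb⟩ := mem_tail_exists_zip (w := y :: t) h'
      exact ⟨b, List.mem_cons_of_mem _ hb⟩

lemma mem_dropLast_exists_zip : ∀ {w : List A} {a : A}, a ∈ w.dropLast →
    ∃ b, (a, b) ∈ w.zip w.tail
  | [], a, h => by simp at h
  | [x], a, h => by simp at h
  | x :: y :: t, a, h => by
    rw [List.dropLast_cons₂] at h
    rcases List.mem_cons.1 h with rfl | h'
    · exact ⟨y, by simp⟩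
    · obtain ⟨b, hb⟩ := mem_dropLast_exists_zip (w := y :: t) h'
      exact ⟨b, List.mem_cons_of_mem _ hb⟩

lemma getLast_not_mem_dropLast {w : List A} (hnd : w.Nodup) (hne : w ≠ []) :
    w.getLast hne ∉ w.dropLast := by
  intro hmem
  have := List.dropLast_append_getLast hne
  rw [← this] at hnd
  have hd := (List.nodup_append.1 hnd).2.2
  exact hd _ hmem _ (by simp) rfl

lemma mem_dropLast_of_ne_getLast {w : List A} {a : A} (ha : a ∈ w) (hne : w ≠ [])
    (h : a ≠ w.getLast hne) : a ∈ w.dropLast := by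
  conv at ha => rw [← List.dropLast_append_getLast hne]
  rcases List.mem_append.1 ha with h' | h'
  · exact h'
  · simp at h'; exact absurd h' h

end ZipAux

section MatroidAux

open Set

variable {O : Type*} [Fintype O] {Mat : Matroid O}

lemma fundCircuit_subset_of_not_mem {X : Set O} {y : O} (hy : y ∉ X) :
    fundCircuit Mat X y ⊆ X := by
  rw [fundCircuit, if_neg hy]
  exact sep_subset _ _

/-- The set of elements exchangeable for `y` in a base `X`, together with `y`,
is dependent (it is the fundamental circuit of `y`). -/
lemma insert_fundCircuit_dep (hE : Mat.E = Set.univ) {X : Set O} (hX : Mat.IsBase X)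
    {y : O} (hy : y ∉ X) : ¬ Mat.Indep (insert y (fundCircuit Mat X y)) := by
  intro hK
  set C := fundCircuit Mat X y with hC
  have hCX : C ⊆ X := fundCircuit_subset_of_not_mem hy
  have hKsub : insert y C ⊆ insert y X := insert_subset_insert hCX
  obtain ⟨B₂, hB₂, hKB₂⟩ := hK.subset_isBasis_of_subset hKsub (by simp [hE])
  have hB₂base : Mat.IsBase B₂ := by
    refine hB₂.indep.isBase_of_ground_subset_closure ?_
    rw [hB₂.closure_eq_closure]
    calc Mat.E = Mat.closure X := hX.closure_eq.symm
    _ ⊆ Mat.closure (insert y X) := Mat.closure_subset_closure (subset_insert _ _)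
  have hyB₂ : y ∈ B₂ := hKB₂ (mem_insert _ _)
  have hXdep : ¬ Mat.Indep (insert y X) := by
    have := hX.insert_dep (e := y) (by simp [hE, hy])
    exact this.not_indep
  obtain ⟨z, hzX, hzB₂⟩ : ∃ z ∈ X, z ∉ B₂ := by
    by_contra h
    push_neg at h
    exact hXdep (hB₂base.indep.subset (insert_subset hyB₂ h))
  have hsub2 : B₂ ⊆ insert y (X \ {z}) := by
    intro w hw
    rcases hB₂.subset hw with rfl | hwX
    · exact mem_insert _ _
    · exact mem_insert_of_mem _ ⟨hwX, fun h => hzB₂ (h ▸ hw)⟩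
  have hcard : (insert y (X \ {z})).ncard ≤ B₂.ncard := by
    have h1 : (insert y (X \ {z})).ncard = (X \ {z}).ncard + 1 :=
      ncard_insert_of_notMem (fun h => hy h.1)
    have h2 : (X \ {z}).ncard + 1 = X.ncard := ncard_diff_singleton_add_one hzX
    have h3 : B₂.ncard = X.ncard := hB₂base.ncard_eq_ncard_of_isBase hX
    omega
  have heq : B₂ = insert y (X \ {z}) :=
    eq_of_subset_of_ncard_le hsub2 hcard (toFinite _)
  have hzC : z ∈ C := by
    rw [hC, fundCircuit, if_neg hy]
    exact ⟨hzX, heq ▸ hB₂base.indep⟩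
  exact hzB₂ (hKB₂ (mem_insert_of_mem _ hzC))

/-- Key lemma: each element of the fundamental circuit of `y` lies in the closure of
the rest of the circuit together with `y`. -/
lemma mem_closure_fundCircuit (hE : Mat.E = Set.univ) {X : Set O} (hX : Mat.IsBase X)
    {y x : O} (hx : x ∈ fundCircuit Mat X y) :
    x ∈ Mat.closure ((fundCircuit Mat X y \ {x}) ∪ {y}) := by
  by_cases hy : y ∈ X
  · rw [fundCircuit, if_pos hy] at hx ⊢
    rcases hx with rfl
    exact Mat.subset_closure _ (by simp [hE]) (by simp)
  · have hxC := hx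
    rw [fundCircuit, if_neg hy] at hx
    obtain ⟨hxX, hBx⟩ := hx
    set C := fundCircuit Mat X y with hC
    have hCX : C ⊆ X := fundCircuit_subset_of_not_mem hy
    have hB₀ : Mat.Indep ((C \ {x}) ∪ {y}) := by
      refine hBx.subset ?_
      rintro z (⟨hz, hzx⟩ | hz)
      · exact mem_insert_of_mem _ ⟨hCX hz, hzx⟩
      · rcases hz with rfl; exact mem_insert _ _
    have hxy : x ≠ y := fun h => hy (h ▸ hxX)
    have hins : insert x ((C \ {x}) ∪ {y}) = insert y C := by
      ext z
      simp only [mem_insert_iff, mem_union, mem_diff, mem_singleton_iff]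
      constructor
      · rintro (rfl | ⟨hz, _⟩ | rfl)
        · exact Or.inr hxC
        · exact Or.inr hz
        · exact Or.inl rfl
      · rintro (rfl | hz)
        · exact Or.inr (Or.inr rfl)
        · by_cases hzx : z = x
          · exact Or.inl hzx
          · exact Or.inr (Or.inl ⟨hz, hzx⟩)
    rw [hB₀.mem_closure_iff]
    left
    rw [Matroid.dep_iff, hins]
    exact ⟨insert_fundCircuit_dep hE hX hy, by simp [hE]⟩

/-- Triangular multi-exchange spanning lemma. -/
lemma span_lemma (hE : Mat.E = Set.univ) {X : Set O} (hX : Mat.IsBase X) :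
    ∀ (L : List (O × O)) (Z : Set O),
      (∀ p ∈ L, p.2 ∈ fundCircuit Mat X p.1) →
      L.Pairwise (fun p q => q.2 ∉ fundCircuit Mat X p.1) →
      (∀ p ∈ L, p.1 ∈ Z) →
      (∀ o ∈ X, (∀ p ∈ L, o ≠ p.2) → o ∈ Z) →
      X ⊆ Mat.closure Z := by
  intro L
  induction L with
  | nil =>
    intro Z _ _ _ h4 o ho
    exact Mat.subset_closure Z (by simp [hE]) (h4 o ho (by simp))
  | cons p L' ih =>
    intro Z h1 h2 h3 h4
    have hp1 := h1 p List.mem_cons_self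
    have hpZ : p.1 ∈ Z := h3 p List.mem_cons_self
    have hx2Z : p.2 ∈ Mat.closure Z := by
      by_cases hyX : p.1 ∈ X
      · have : p.2 = p.1 := by
          rw [fundCircuit, if_pos hyX] at hp1; simpa using hp1
        exact Mat.subset_closure Z (by simp [hE]) (this ▸ hpZ)
      · refine Mat.closure_subset_closure ?_ (mem_closure_fundCircuit hE hX hp1)
        rintro z (⟨hzC, hzx⟩ | hz)
        · refine h4 z (fundCircuit_subset_of_not_mem hyX hzC) ?_
          intro q hq
          rcases List.mem_cons.1 hq with rfl | hq'
          · exact hzx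
          · intro h
            exact (List.pairwise_cons.1 h2).1 q hq' (h ▸ hzC)
        · rcases hz with rfl; exact hpZ
    have hsub : X ⊆ Mat.closure (insert p.2 Z) := by
      refine ih (insert p.2 Z) (fun q hq => h1 q (List.mem_cons_of_mem _ hq))
        ((List.pairwise_cons.1 h2).2)
        (fun q hq => mem_insert_of_mem _ (h3 q (List.mem_cons_of_mem _ hq))) ?_
      intro o ho hone
      by_cases hop : o = p.2
      · exact hop ▸ mem_insert _ _
      · refine mem_insert_of_mem _ (h4 o ho ?_)
        intro q hq
        rcases List.mem_cons.1 hq with rfl | hq'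
        · exact hop
        · exact hone q hq'
    refine hsub.trans (Mat.closure_subset_closure_of_subset_closure ?_)
    exact insert_subset hx2Z (Mat.subset_closure Z (by simp [hE]))

end MatroidAux
/-- Given two everywhere-matched `ℐ`-constrained matchings `m`, `n`
whose matched object sets are bases, and node-disjoint directed paths `P i` from `sa i`
to `tb i` in the exchange graph with no arc from a later path to an earlier one, there
is a subset `A'` of the agents on the paths containing all endpoints, such that
reassigning the agents of `A'` other than the endpoints `tb i` to their objects under
`n` and leaving all `tb i` unmatched yields an `ℐ`-constrained matching. -/
theorem exchange_along_paths
    {A O : Type*} [Fintype A] [Fintype O]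
    (adj : A → O → Prop)
    (Mat : Matroid O) (hE : Mat.E = Set.univ)
    (m n : A → O)
    (hm : IsConstrained adj Mat (fun a => some (m a)))
    (hn : IsConstrained adj Mat (fun a => some (n a)))
    (hmB : Mat.IsBase (Set.range m)) (hnB : Mat.IsBase (Set.range n))
    (ℓ : ℕ) (P : Fin ℓ → List A) (sa tb : Fin ℓ → A)
    (hP : ∀ i, IsPath (exchArc Mat m n) (P i) (sa i) (tb i))
    (hdisj : ∀ i j, i ≠ j → ∀ x, x ∈ P i → x ∉ P j)
    (harc : ∀ i j : Fin ℓ, j < i → ∀ x ∈ P i, ∀ y ∈ P j, ¬ exchArc Mat m n x y) :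
    ∃ A' : Set A, A' ⊆ {x : A | ∃ i, x ∈ P i} ∧
      (∀ i, sa i ∈ A' ∧ tb i ∈ A') ∧
      IsConstrained adj Mat
        (fun x => if ∃ i, x = tb i then none
          else if x ∈ A' then some (n x) else some (m x)) := by

  have hm_inj : Function.Injective m := by
    intro a b h
    exact hm.1.2 a b (m b) (show some (m a) = some (m b) by rw [h]) rfl
  have hn_inj : Function.Injective n := by
    intro a b h
    exact hn.1.2 a b (n b) (show some (n a) = some (n b) by rw [h]) rfl
  set arcR : A → A → Prop := exchArc Mat m n with harcR
  have hPne : ∀ i, P i ≠ [] := fun i => (hP i).1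
  have hPnd : ∀ i, (P i).Nodup := fun i => (hP i).2.1
  have hPch : ∀ i, (P i).Chain' arcR := fun i => (hP i).2.2.1
  set w : Fin ℓ → List A := fun i => chosenL arcR (P i) with hwdef
  have hwsub : ∀ i, (w i).Sublist (P i) := fun i => chosenL_sublist _ _
  have hwss : ∀ i, ∀ x ∈ w i, x ∈ P i := fun i x hx => (hwsub i).subset hx
  have hwnd : ∀ i, (w i).Nodup := fun i => (hPnd i).sublist (hwsub i)
  have hwch : ∀ i, (w i).Chain' arcR := fun i => chosenL_chain' _ _ (hPch i)
  have hwne : ∀ i, w i ≠ [] := fun i => chosenL_ne_nil _ (hPne i)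
  have hwhead : ∀ i, (w i).head? = some (sa i) :=
    fun i => (chosenL_head? _ _).trans (hP i).2.2.2.1
  have hwlast : ∀ i, (w i).getLast? = some (tb i) :=
    fun i => (chosenL_getLast? _ _ (hPch i)).trans (hP i).2.2.2.2
  have hsaw : ∀ i, sa i ∈ w i := fun i => List.mem_of_mem_head? (by rw [hwhead i]; rfl)
  have htbw : ∀ i, tb i ∈ w i := fun i => List.mem_of_mem_getLast? (by rw [hwlast i]; rfl)
  have htbP : ∀ i, tb i ∈ P i := fun i => hwss i _ (htbw i)
  have htblast : ∀ i, (w i).getLast (hwne i) = tb i := by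
    intro i
    have := List.getLast?_eq_getLast_of_ne_nil (hwne i)
    rw [hwlast i] at this
    exact (Option.some_injective _ this.symm)
  set A' : Set A := {x | ∃ i, x ∈ w i} with hA'def
  set T : Set A := {x | ∃ i, x = tb i} with hTdef
  have hsaA' : ∀ i, sa i ∈ A' := fun i => ⟨i, hsaw i⟩
  have htbA' : ∀ i, tb i ∈ A' := fun i => ⟨i, htbw i⟩
  have hTA' : T ⊆ A' := by rintro x ⟨i, rfl⟩; exact htbA' i
  have hsubP : A' ⊆ {x : A | ∃ i, x ∈ P i} := by
    rintro x ⟨i, hx⟩; exact ⟨i, hwss i x hx⟩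
  -- non-terminal chosen agents are not in T
  have hnotT : ∀ i, ∀ a ∈ (w i).dropLast, a ∉ T := by
    intro i a ha hT
    obtain ⟨j, haj⟩ := hT
    by_cases hij : j = i
    · subst hij
      rw [haj, ← htblast j] at ha
      exact getLast_not_mem_dropLast (hwnd j) (hwne j) ha
    · have haPi : a ∈ P i := hwss i a ((List.dropLast_sublist _).subset ha)
      rw [haj] at haPi
      exact hdisj i j (fun h => hij h.symm) (tb j) haPi (htbP j)
  -- pair lists
  set pairsL : Fin ℓ → List (A × A) := fun i => (w i).zip (w i).tail with hpairsdef
  have hpair_arc : ∀ i, ∀ p ∈ pairsL i, arcR p.1 p.2 := fun i => chain'_zip (hwch i)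
  have hpair_mem : ∀ i, ∀ p ∈ pairsL i, p.1 ∈ (w i).dropLast ∧ p.2 ∈ (w i).tail :=
    fun i p hp => zip_tail_mem hp
  set gL : List (A × A) := ((List.finRange ℓ).reverse.map pairsL).flatten with hgLdef
  have hmemg : ∀ p ∈ gL, ∃ i, p ∈ pairsL i := by
    intro p hp
    rw [hgLdef, List.mem_flatten] at hp
    obtain ⟨l', hl', hpl'⟩ := hp
    rw [List.mem_map] at hl'
    obtain ⟨i, _, rfl⟩ := hl'
    exact ⟨i, hpl'⟩
  have hmemg' : ∀ i, ∀ p ∈ pairsL i, p ∈ gL := by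
    intro i p hp
    rw [hgLdef, List.mem_flatten]
    exact ⟨pairsL i, List.mem_map_of_mem (by simp), hp⟩
  have hpw : gL.Pairwise (fun p q => ¬ arcR p.1 q.2) := by
    rw [hgLdef, List.pairwise_flatten]
    constructor
    · intro l' hl'
      rw [List.mem_map] at hl'
      obtain ⟨i, _, rfl⟩ := hl'
      exact chosenL_pairwise arcR (P i) (hPch i)
    · rw [List.pairwise_map, List.pairwise_reverse]
      refine (List.pairwise_lt_finRange ℓ).imp ?_
      intro i j hij p hp q hq
      have hp1 : p.1 ∈ P j := hwss j _ ((List.dropLast_sublist _).subset (hpair_mem j p hp).1)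
      have hq2 : q.2 ∈ P i := hwss i _ (List.mem_of_mem_tail (hpair_mem i q hq).2)
      exact harc j i hij p.1 hp1 q.2 hq2
  set OL : List (O × O) := gL.map (fun p => (n p.1, m p.2)) with hOLdef
  set Z : Set O := n '' (A' \ T) ∪ m '' A'ᶜ with hZdef
  set Zp : Set O := Z ∪ m '' Set.range sa with hZpdef
  -- spanning
  have hspan : Set.range m ⊆ Mat.closure Zp := by
    refine span_lemma hE hmB OL Zp ?_ ?_ ?_ ?_
    · rintro p hp
      rw [hOLdef, List.mem_map] at hp
      obtain ⟨q, hq, rfl⟩ := hp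
      obtain ⟨i, hqi⟩ := hmemg q hq
      exact hpair_arc i q hqi
    · rw [hOLdef, List.pairwise_map]
      exact hpw.imp (fun h => h)
    · rintro p hp
      rw [hOLdef, List.mem_map] at hp
      obtain ⟨q, hq, rfl⟩ := hp
      obtain ⟨i, hqi⟩ := hmemg q hq
      have h1 : q.1 ∈ (w i).dropLast := (hpair_mem i q hqi).1
      have hq1A' : q.1 ∈ A' := ⟨i, (List.dropLast_sublist _).subset h1⟩
      have hq1T : q.1 ∉ T := hnotT i q.1 h1
      exact Or.inl (Or.inl ⟨q.1, ⟨hq1A', hq1T⟩, rfl⟩)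
    · rintro o ⟨a, rfl⟩ hno
      by_cases hA : a ∈ A'
      · obtain ⟨i, haw⟩ := hA
        by_cases hsa : a = sa i
        · exact Or.inr ⟨a, ⟨i, hsa.symm⟩, rfl⟩
        · have hat : a ∈ (w i).tail := by
            rcases hwi : w i with _ | ⟨h0, t⟩
            · exact absurd hwi (hwne i)
            · have : h0 = sa i := by
                have := hwhead i; rw [hwi] at this
                exact Option.some_injective _ this
              rw [hwi] at haw
              rcases List.mem_cons.1 haw with rfl | h'
              · exact absurd this hsa
              · exact h'
          obtain ⟨b, hb⟩ := mem_tail_exists_zip hat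
          exfalso
          refine hno (n b, m a) ?_ rfl
          rw [hOLdef, List.mem_map]
          exact ⟨(b, a), hmemg' i _ hb, rfl⟩
      · exact Or.inl (Or.inr ⟨a, hA, rfl⟩)
  -- Zp is independent
  have hZpE : Zp ⊆ Mat.E := by rw [hE]; exact Set.subset_univ _
  obtain ⟨I, hI⟩ := Mat.exists_isBasis Zp hZpE
  have hIbase : Mat.IsBase I := by
    refine hI.indep.isBase_of_ground_subset_closure ?_
    rw [hI.closure_eq_closure]
    calc Mat.E = Mat.closure (Set.range m) := hmB.closure_eq.symm
    _ ⊆ Mat.closure (Mat.closure Zp) := Mat.closure_subset_closure hspan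
    _ = Mat.closure Zp := Mat.closure_closure Zp
  have htb_inj : Function.Injective tb := by
    intro i j hij
    by_contra hne
    exact hdisj i j hne (tb i) (htbP i) (hij ▸ htbP j)
  have hsa_inj : Function.Injective sa := by
    intro i j hij
    by_contra hne
    exact hdisj i j hne (sa i) (hwss i _ (hsaw i)) (hij ▸ hwss j _ (hsaw j))
  have hTr : T = Set.range tb := by
    ext x; simp [hTdef, eq_comm]
  have hTcard : T.ncard = ℓ := by
    rw [hTr, ← Set.image_univ, Set.ncard_image_of_injective _ htb_inj, Set.ncard_univ,
      Nat.card_eq_fintype_card, Fintype.card_fin]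
  have hScard : (Set.range sa).ncard = ℓ := by
    rw [← Set.image_univ, Set.ncard_image_of_injective _ hsa_inj, Set.ncard_univ,
      Nat.card_eq_fintype_card, Fintype.card_fin]
  have hXcard : (Set.range m).ncard = (Set.univ : Set A).ncard := by
    rw [← Set.image_univ, Set.ncard_image_of_injective _ hm_inj]
  have hZpcard : Zp.ncard ≤ (Set.range m).ncard := by
    have hZp_eq : Zp = n '' (A' \ T) ∪ m '' (A'ᶜ ∪ Set.range sa) := by
      rw [hZpdef, hZdef, Set.image_union, Set.union_assoc]
    have h1 : Zp.ncard ≤ (A' \ T).ncard + (A'ᶜ ∪ Set.range sa).ncard := by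
      rw [hZp_eq]
      refine (Set.ncard_union_le _ _).trans ?_
      rw [Set.ncard_image_of_injective _ hn_inj, Set.ncard_image_of_injective _ hm_inj]
    have h2 : (A' \ T).ncard = A'.ncard - T.ncard := Set.ncard_diff hTA'
    have h3 : (A'ᶜ ∪ Set.range sa).ncard ≤ A'ᶜ.ncard + ℓ := by
      refine (Set.ncard_union_le _ _).trans ?_
      rw [hScard]
    have h4 : A'.ncard + A'ᶜ.ncard = (Set.univ : Set A).ncard := by
      rw [Set.ncard_univ]; exact Set.ncard_add_ncard_compl A'
    have h5 : T.ncard ≤ A'.ncard := Set.ncard_le_ncard hTA'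
    rw [hXcard]
    omega
  have hZpindep : Mat.Indep Zp := by
    have hIX : I.ncard = (Set.range m).ncard := hIbase.ncard_eq_ncard_of_isBase hmB
    have : I = Zp := Set.eq_of_subset_of_ncard_le hI.subset (by omega) (Set.toFinite _)
    exact this ▸ hIbase.indep
  -- assemble
  refine ⟨A', hsubP, fun i => ⟨hsaA' i, htbA' i⟩, ⟨⟨?_, ?_⟩, ?_⟩⟩
  · -- adjacency
    intro a o ha
    beta_reduce at ha
    have ha' := ha
    by_cases hT : ∃ i, a = tb i
    · rw [if_pos hT] at ha'; cases ha'
    · rw [if_neg hT] at ha'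
      by_cases hA : a ∈ A'
      · rw [if_pos hA] at ha'
        cases Option.some_injective _ ha'
        exact hn.1.1 a (n a) rfl
      · rw [if_neg hA] at ha'
        cases Option.some_injective _ ha'
        exact hm.1.1 a (m a) rfl
  · -- injectivity
    intro a a' o ha ha'
    beta_reduce at ha ha'
    have hb := ha
    have hb' := ha'
    clear ha ha'
    by_cases hT : ∃ i, a = tb i
    · rw [if_pos hT] at hb; cases hb
    by_cases hT' : ∃ i, a' = tb i
    · rw [if_pos hT'] at hb'; cases hb'
    rw [if_neg hT] at hb
    rw [if_neg hT'] at hb'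
    have key : ∀ b b' : A, b ∈ A' → ¬ (∃ i, b = tb i) → b' ∉ A' → n b = m b' → False := by
      intro b b' hbA hbT hb'A hnm
      obtain ⟨i, hbw⟩ := hbA
      have hblast : b ≠ (w i).getLast (hwne i) := by
        rw [htblast i]; intro h; exact hbT ⟨i, h⟩
      have hbdrop : b ∈ (w i).dropLast := mem_dropLast_of_ne_getLast hbw (hwne i) hblast
      obtain ⟨c, hc⟩ := mem_dropLast_exists_zip hbdrop
      have harcbc : arcR b c := hpair_arc i (b, c) hc
      have hnbX : n b ∈ Set.range m := ⟨b', hnm.symm⟩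
      have hmc : m c ∈ fundCircuit Mat (Set.range m) (n b) := harcbc
      rw [fundCircuit, if_pos hnbX] at hmc
      have hcb' : c = b' := hm_inj (by rw [Set.mem_singleton_iff.1 hmc, hnm])
      have hcw : c ∈ w i := List.mem_of_mem_tail (zip_tail_mem hc).2
      exact hb'A ⟨i, hcb' ▸ hcw⟩
    by_cases hA : a ∈ A' <;> by_cases hA' : a' ∈ A'
    · rw [if_pos hA] at hb; rw [if_pos hA'] at hb'
      have : n a = n a' := by
        rw [Option.some_injective _ hb, Option.some_injective _ hb']
      exact hn_inj this
    · rw [if_pos hA] at hb; rw [if_neg hA'] at hb'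
      have : n a = m a' := by
        rw [Option.some_injective _ hb, Option.some_injective _ hb']
      exact absurd (key a a' hA hT hA' this) (fun h => h)
    · rw [if_neg hA] at hb; rw [if_pos hA'] at hb'
      have : n a' = m a := by
        rw [Option.some_injective _ hb, Option.some_injective _ hb']
      exact absurd (key a' a hA' hT' hA this) (fun h => h)
    · rw [if_neg hA] at hb; rw [if_neg hA'] at hb'
      have : m a = m a' := by
        rw [Option.some_injective _ hb, Option.some_injective _ hb']
      exact hm_inj this
  · -- independence
    refine hZpindep.subset ?_
    rintro o ⟨a, ha⟩
    beta_reduce at ha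
    have ha' := ha
    by_cases hT : ∃ i, a = tb i
    · rw [if_pos hT] at ha'; cases ha'
    · rw [if_neg hT] at ha'
      by_cases hA : a ∈ A'
      · rw [if_pos hA] at ha'
        cases Option.some_injective _ ha'
        exact Or.inl (Or.inl ⟨a, ⟨hA, hT⟩, rfl⟩)
      · rw [if_neg hA] at ha'
        cases Option.some_injective _ ha'
        exact Or.inl (Or.inr ⟨a, hA, rfl⟩)
end

section
/- Let (G, ℐ, ≻) be a matroid-constrained matching instance with partial-order preferences, let ℳ be a Pareto-optimal set of ℐ-constrained matchings, and let N be an ℐ-constrained matching, such that every agent is matched in N and in every M ∈ ℳ, and M(A) and N(A) are bases of ℐ for all M ∈ ℳ. Fix M ∈ ℳ and a bijection f : N(A) → M(A) with f(o) ∈ C(M(A), o) for all o ∈ N(A), and let σ be the permutation of the agent set A defined by σ(a) = the unique agent b with M(b) = f(N(a)). Define A₊ = {a : N ≻_a M' for all M' ∈ ℳ} and A₋ = {a : M' ≻_a N for some M' ∈ ℳ}. Then for every a₊ ∈ A₊, the σ-orbit of a₊ contains some agent of A₋; in particular, σ(a₊) ≠ a₊. -/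
open scoped Classical

/-- A set `Y` of matchings Pareto-dominates a set `Z`. -/
def Dominates {A O : Type*} (pref : A → O → O → Prop)
    (Y Z : Set (A → Option O)) : Prop :=
  Y.ncard ≤ Z.ncard ∧
  (∀ a : A, ∃ MY ∈ Y, ∀ MZ ∈ Z, ¬ PrefM pref a MZ MY) ∧
  (∃ a : A, ∃ MY ∈ Y, ∀ MZ ∈ Z, PrefM pref a MY MZ)

/-- `Mset` is Pareto-optimal: no set of feasible matchings Pareto-dominates it. -/
def ParetoOptimal {A O : Type*} (pref : A → O → O → Prop) (F : Set (A → Option O))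
    (Mset : Set (A → Option O)) : Prop :=
  ¬ ∃ Y : Set (A → Option O), Y ⊆ F ∧ Dominates pref Y Mset

section AuxLemmas

open Set

/-- Generic: a finite set satisfying `P` has a subset satisfying `P` that is
removal-minimal. -/
lemma exists_removal_minimal {α : Type*} (P : Set α → Prop) :
    ∀ (nn : ℕ) (X : Set α), X.Finite → X.ncard = nn → P X →
      ∃ S, S ⊆ X ∧ P S ∧ ∀ x ∈ S, ¬ P (S \ {x}) := by
  intro nn
  induction nn using Nat.strong_induction_on with
  | _ nn ih =>
    intro X hfin hcard hPX
    by_cases h : ∃ x ∈ X, P (X \ {x})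
    · obtain ⟨x, hx, hPx⟩ := h
      have hlt : (X \ {x}).ncard < nn := by
        rw [← hcard]
        exact Set.ncard_lt_ncard (Set.sdiff_singleton_ssubset.2 hx) hfin
      obtain ⟨S, hS1, hS2, hS3⟩ := ih _ hlt (X \ {x}) hfin.sdiff rfl hPx
      exact ⟨S, hS1.trans diff_subset, hS2, hS3⟩
    · push_neg at h
      exact ⟨X, subset_rfl, hPX, h⟩

/-- Generic: finite maximality for a transitive irreflexive relation. -/
lemma exists_maximal_rel {α : Type*} (r : α → α → Prop)
    (htrans : ∀ u v w, r u v → r v w → r u w)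
    (hirr : ∀ u, ¬ r u u) :
    ∀ (nn : ℕ) (s : Set α), s.Finite → s.ncard = nn → ∀ z ∈ s,
      ∃ w ∈ s, (w = z ∨ r w z) ∧ ∀ u ∈ s, ¬ r u w := by
  intro nn
  induction nn using Nat.strong_induction_on with
  | _ nn ih =>
    intro s hfin hcard z hz
    by_cases h : ∃ u ∈ s, r u z
    · obtain ⟨u, hu, huz⟩ := h
      have hzs' : z ∉ {v ∈ s | r v z} := fun hh => hirr z hh.2
      have hss : {v ∈ s | r v z} ⊂ s := ⟨fun v hv => hv.1, fun hsub => hzs' (hsub hz)⟩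
      have hlt : {v ∈ s | r v z}.ncard < nn := by
        rw [← hcard]; exact Set.ncard_lt_ncard hss hfin
      obtain ⟨w, hw, hwu, hmax⟩ :=
        ih _ hlt {v ∈ s | r v z} (hfin.subset (fun v hv => hv.1)) rfl u ⟨hu, huz⟩
      refine ⟨w, hw.1, Or.inr ?_, fun v hv hrv => ?_⟩
      · rcases hwu with rfl | hwu
        · exact huz
        · exact htrans _ _ _ hwu huz
      · exact hmax v ⟨hv, htrans _ _ _ hrv hw.2⟩ hrv
    · push_neg at h
      exact ⟨z, hz, Or.inl rfl, h⟩


lemma exists_removal_minimal' {α : Type*} (P : Set α → Prop) (X : Set α) (hfin : X.Finite)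
    (hPX : P X) : ∃ S, S ⊆ X ∧ P S ∧ ∀ x ∈ S, ¬ P (S \ {x}) :=
  exists_removal_minimal P X.ncard X hfin rfl hPX

/-- Key matroid fact: `y` lies in the closure of the set of elements exchangeable for it. -/
lemma mem_closure_exchSet {O : Type*} (Mat : Matroid O) (hE : Mat.E = Set.univ)
    {X : Set O} (hXi : Mat.Indep X) (hfin : X.Finite) {y : O}
    (hycl : y ∈ Mat.closure X) (hyX : y ∉ X) :
    y ∈ Mat.closure {x ∈ X | Mat.Indep (insert y (X \ {x}))} := by
  obtain ⟨S, hSX, hycS, hmin⟩ :=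
    exists_removal_minimal' (fun S => y ∈ Mat.closure S) X hfin hycl
  refine Mat.closure_subset_closure ?_ hycS
  intro x hx
  have hx1 : x ∈ X := hSX hx
  refine ⟨hx1, ?_⟩
  by_contra hdep
  have hIdiff : Mat.Indep (X \ {x}) := hXi.subset diff_subset
  have hyXd : y ∉ X \ {x} := fun h => hyX h.1
  have hyclXd : y ∈ Mat.closure (X \ {x}) := by
    by_contra hno
    exact hdep ((hIdiff.notMem_closure_iff_of_notMem hyXd (by simp [hE])).1 hno)
  -- closure exchange: y ∈ cl(insert x (S\{x})) \ cl(S\{x}) gives x ∈ cl(insert y (S\{x}))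
  have hSx : insert x (S \ {x}) = S := Set.insert_diff_singleton.trans (by
    rw [Set.insert_eq_of_mem hx])
  have hkey : x ∈ Mat.closure (insert y (S \ {x})) \ Mat.closure (S \ {x}) := by
    refine Matroid.closure_exchange ?_
    rw [hSx]
    exact ⟨hycS, hmin x hx⟩
  have hsub : insert y (S \ {x}) ⊆ Mat.closure (X \ {x}) := by
    refine Set.insert_subset hyclXd ?_
    refine (Set.diff_subset_diff_left hSX).trans (Mat.subset_closure _ (by simp [hE]))
  have : x ∈ Mat.closure (X \ {x}) :=
    Mat.closure_subset_closure_of_subset_closure hsub hkey.1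
  exact hXi.notMem_closure_diff_of_mem hx1 this

lemma fundCircuit_subset {O : Type*} (Mat : Matroid O) (X : Set O) (o : O) :
    fundCircuit Mat X o ⊆ X := by
  unfold fundCircuit
  split
  · next h => exact fun x hx => by simpa [hx.symm ▸ h] using (Set.mem_singleton_iff.1 hx ▸ h)
  · exact fun x hx => hx.1

/-- Exchange lemma: triangular simultaneous exchange preserves independence. -/
lemma exchange_indep {O : Type*} [Fintype O] (Mat : Matroid O) (hE : Mat.E = Set.univ)
    {X : Set O} (hX : Mat.IsBase X)
    (t : ℕ) (x y : ℕ → O)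
    (hxy : ∀ i, i < t → x i ∈ fundCircuit Mat X (y i))
    (htri : ∀ i j, i < j → j < t → x j ∉ fundCircuit Mat X (y i))
    (hxinj : ∀ i j, i < t → j < t → x i = x j → i = j) :
    Mat.Indep ((X \ (x '' {i | i < t})) ∪ (y '' {i | i < t})) := by
  have hxX : ∀ i, i < t → x i ∈ X := fun i hi => fundCircuit_subset Mat X (y i) (hxy i hi)
  have hyeq : ∀ i, i < t → y i ∈ X → x i = y i := by
    intro i hi hyX
    have := hxy i hi
    rw [fundCircuit, if_pos hyX] at this
    exact this
  -- y i is spanned by X minus any x j with j > i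
  have hspan : ∀ i j, i < j → j < t → y i ∈ Mat.closure (X \ {x j}) := by
    intro i j hij hjt
    by_cases hyX : y i ∈ X
    · have hne : y i ≠ x j := by
        intro h
        exact absurd (hxinj i j (hij.trans hjt) hjt ((hyeq i (hij.trans hjt) hyX).trans h))
          hij.ne
      exact Mat.subset_closure _ (by simp [hE]) ⟨hyX, hne⟩
    · have h1 : y i ∈ Mat.closure {z ∈ X | Mat.Indep (insert (y i) (X \ {z}))} :=
        mem_closure_exchSet Mat hE hX.indep (Set.toFinite X)
          (by rw [hX.closure_eq, hE]; trivial) hyX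
      refine Mat.closure_subset_closure ?_ h1
      intro z hz
      refine ⟨hz.1, ?_⟩
      intro hzx
      apply htri i j hij hjt
      rw [fundCircuit, if_neg hyX]
      exact hzx ▸ hz
  suffices h : ∀ k, k ≤ t → Mat.Indep ((X \ (x '' {i | i < k})) ∪ (y '' {i | i < k})) from
    h t le_rfl
  intro k
  induction k with
  | zero =>
    intro _
    simpa using hX.indep
  | succ k ih =>
    intro hk1
    have hkt : k < t := hk1
    have ihk := ih (le_of_lt hk1)
    have hsetx : x '' {i | i < k + 1} = insert (x k) (x '' {i | i < k}) := by
      rw [show {i | i < k + 1} = insert k {i | i < k} by ext i; simp [Nat.lt_succ_iff_lt_or_eq,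
        or_comm, Nat.le_iff_lt_or_eq], Set.image_insert_eq]
    have hsety : y '' {i | i < k + 1} = insert (y k) (y '' {i | i < k}) := by
      rw [show {i | i < k + 1} = insert k {i | i < k} by ext i; simp [Nat.lt_succ_iff_lt_or_eq,
        or_comm, Nat.le_iff_lt_or_eq], Set.image_insert_eq]
    have hxknot : x k ∉ x '' {i | i < k} := by
      rintro ⟨i, hi, hxi⟩
      exact absurd (hxinj i k (lt_trans hi hkt) hkt hxi) (Nat.ne_of_lt hi)
    have hxknoty : x k ∉ y '' {i | i < k} := by
      rintro ⟨i, hi, hyi⟩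
      by_cases hyX : y i ∈ X
      · exact absurd (hxinj i k (lt_trans hi hkt) hkt ((hyeq i (lt_trans hi hkt) hyX).trans hyi))
          (Nat.ne_of_lt hi)
      · exact hyX (hyi ▸ hxX k hkt)
    by_cases hykX : y k ∈ X
    · -- neutral step: the set does not change
      have hxk : x k = y k := hyeq k hkt hykX
      have : (X \ (x '' {i | i < k + 1})) ∪ (y '' {i | i < k + 1}) =
          (X \ (x '' {i | i < k})) ∪ (y '' {i | i < k}) := by
        rw [hsetx, hsety, hxk]
        ext z
        by_cases hz : z = y k
        · subst hz
          constructor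
          · intro _; exact Or.inl ⟨hykX, fun hc => hxknot (hxk ▸ hc)⟩
          · intro _; exact Or.inr (Set.mem_insert _ _)
        · simp only [Set.mem_union, Set.mem_diff, Set.mem_insert_iff]
          tauto
      rw [this]
      exact ihk
    · -- real exchange step
      have hclsub : (X \ (x '' {i | i < k + 1})) ∪ (y '' {i | i < k}) ⊆
          Mat.closure (X \ {x k}) := by
        rintro z (⟨hzX, hznot⟩ | ⟨i, hi, rfl⟩)
        · refine Mat.subset_closure _ (by simp [hE]) ⟨hzX, ?_⟩
          intro hc
          exact hznot (hc ▸ (hsetx ▸ Set.mem_insert _ _))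
        · exact hspan i k hi hkt
      have hIdep : Mat.Indep ((X \ (x '' {i | i < k + 1})) ∪ (y '' {i | i < k})) := by
        refine ihk.subset ?_
        rintro z (⟨hzX, hznot⟩ | hz)
        · exact Or.inl ⟨hzX, fun hc => hznot (hsetx ▸ Set.mem_insert_of_mem _ hc)⟩
        · exact Or.inr hz
      have hynotcl : y k ∉ Mat.closure ((X \ (x '' {i | i < k + 1})) ∪ (y '' {i | i < k})) := by
        intro hc
        have h2 : y k ∈ Mat.closure (X \ {x k}) :=
          Mat.closure_subset_closure_of_subset_closure hclsub hc
        have h3 : Mat.Indep (insert (y k) (X \ {x k})) := by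
          have := hxy k hkt
          rw [fundCircuit, if_neg hykX] at this
          exact this.2
        have h4 : y k ∉ X \ {x k} := fun h => hykX h.1
        exact ((hX.indep.subset diff_subset).notMem_closure_iff_of_notMem h4
          (by simp [hE])).2 h3 h2
      have : Mat.Indep (insert (y k) ((X \ (x '' {i | i < k + 1})) ∪ (y '' {i | i < k}))) := by
        rw [hIdep.insert_indep_iff]
        exact Or.inl ⟨by simp [hE], hynotcl⟩
      have heq : (X \ (x '' {i | i < k + 1})) ∪ (y '' {i | i < k + 1}) =
          insert (y k) ((X \ (x '' {i | i < k + 1})) ∪ (y '' {i | i < k})) := by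
        rw [hsety]
        ext z
        simp only [Set.mem_union, Set.mem_insert_iff]
        tauto
      rw [heq]
      exact this

end AuxLemmas

/-- Let `ℳ` be a Pareto-optimal set of `ℐ`-constrained matchings and
`N` an `ℐ`-constrained matching, all fully matched with matched object sets bases.
Fix `M ∈ ℳ` (given by `m`) and a permutation `σ` of the agents induced by a bijective
basis exchange, i.e. `M(σ a) ∈ C(M(A), N(a))` for all `a`. Then for every
`aplus ∈ A₊ = {a : ∀ M' ∈ ℳ, N ≻ₐ M'}`, the `σ`-orbit of `aplus` meets
`A₋ = {a : ∃ M' ∈ ℳ, M' ≻ₐ N}`; in particular `σ aplus ≠ aplus`. -/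
theorem orbit_meets_Aminus
    {A O : Type*} [Fintype A] [Fintype O]
    (adj : A → O → Prop) (pref : A → O → O → Prop)
    (hpref : IsPrefOrder adj pref)
    (Mat : Matroid O) (hE : Mat.E = Set.univ)
    (Mset : Set (A → Option O))
    (hfeas : ∀ M' ∈ Mset, IsConstrained adj Mat M')
    (hmatched : ∀ M' ∈ Mset, ∀ a : A, M' a ≠ none)
    (hbases : ∀ M' ∈ Mset, Mat.IsBase (matchedObjs M'))
    (hPO : ParetoOptimal pref {M' | IsConstrained adj Mat M'} Mset)
    (m : A → O) (hmem : (fun a => some (m a)) ∈ Mset)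
    (n : A → O) (hn : IsConstrained adj Mat (fun a => some (n a)))
    (hnB : Mat.IsBase (Set.range n))
    (σ : Equiv.Perm A)
    (hσ : ∀ a : A, m (σ a) ∈ fundCircuit Mat (Set.range m) (n a))
    (aplus : A)
    (hplus : ∀ M' ∈ Mset, PrefM pref aplus (fun a => some (n a)) M') :
    (∃ k : ℕ, ∃ M' ∈ Mset, PrefM pref ((σ ^ k) aplus) M' (fun a => some (n a))) ∧
      σ aplus ≠ aplus := by
  have minj : ∀ a b : A, m a = m b → a = b := by
    intro a b h
    exact (hfeas _ hmem).1.2 a b (m a) rfl (by rw [h])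
  have ninj : ∀ a b : A, n a = n b → a = b := by
    intro a b h
    exact hn.1.2 a b (n a) rfl (by rw [h])
  have hXB : Mat.IsBase (Set.range m) := by
    have heq : matchedObjs (fun a : A => some (m a)) = Set.range m := by
      ext o; simp [matchedObjs, Set.mem_range]
    exact heq ▸ hbases _ hmem
  have hA : ∃ k : ℕ, ∃ M' ∈ Mset, PrefM pref ((σ ^ k) aplus) M' (fun a => some (n a)) := by
    by_contra hcon
    push_neg at hcon
    -- existence of a closed walk through aplus inside the orbit
    have hPP : ∃ t : ℕ, 1 ≤ t ∧ ∃ c : ℕ → A, c 0 = aplus ∧ c t = aplus ∧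
        (∀ i, i < t → exchArc Mat m n (c i) (c (i+1))) ∧
        (∀ i, ∃ k : ℕ, (σ ^ k) aplus = c i) := by
      refine ⟨orderOf σ, orderOf_pos σ, fun i => (σ ^ i) aplus, by simp, ?_, ?_, fun i => ⟨i, rfl⟩⟩
      · show (σ ^ orderOf σ) aplus = aplus
        rw [pow_orderOf_eq_one]; simp
      · intro i _
        show exchArc Mat m n ((σ ^ i) aplus) ((σ ^ (i+1)) aplus)
        have h1 : (σ ^ (i+1)) aplus = σ ((σ ^ i) aplus) := by
          rw [pow_succ']; rfl
        rw [h1]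
        exact hσ ((σ ^ i) aplus)
    obtain ⟨t0, ⟨h1t, c, hc0, hct, hwalk, horb⟩, hmin⟩ :
        ∃ t0, (1 ≤ t0 ∧ ∃ c : ℕ → A, c 0 = aplus ∧ c t0 = aplus ∧
          (∀ i, i < t0 → exchArc Mat m n (c i) (c (i+1))) ∧
          (∀ i, ∃ k : ℕ, (σ ^ k) aplus = c i)) ∧
        ∀ t', t' < t0 → ¬ (1 ≤ t' ∧ ∃ c : ℕ → A, c 0 = aplus ∧ c t' = aplus ∧
          (∀ i, i < t' → exchArc Mat m n (c i) (c (i+1))) ∧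
          (∀ i, ∃ k : ℕ, (σ ^ k) aplus = c i)) :=
      ⟨Nat.find hPP, Nat.find_spec hPP, fun t' h => Nat.find_min hPP h⟩
    -- no forward chords
    have hred : ∀ i j, i < j → j < t0 → ¬ exchArc Mat m n (c i) (c (j+1)) := by
      intro i j hij hjt harc
      apply hmin (t0 - (j - i)) (by omega)
      refine ⟨by omega, fun l => if l ≤ i then c l else c (l + (j - i)), ?_, ?_, ?_, ?_⟩
      · dsimp only
        rw [if_pos (by omega : (0:ℕ) ≤ i)]
        exact hc0
      · dsimp only
        rw [if_neg (by omega : ¬ (t0 - (j - i) ≤ i))]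
        rw [(by omega : t0 - (j - i) + (j - i) = t0)]
        exact hct
      · intro l hl
        dsimp only
        by_cases h1 : l + 1 ≤ i
        · rw [if_pos (by omega : l ≤ i), if_pos h1]
          exact hwalk l (by omega)
        · by_cases h2 : l ≤ i
          · have hli : l = i := by omega
            subst hli
            rw [if_pos h2, if_neg h1, (by omega : l + 1 + (j - l) = j + 1)]
            exact harc
          · rw [if_neg h2, if_neg (by omega), (by omega : l + 1 + (j - i) = (l + (j - i)) + 1)]
            exact hwalk _ (by omega)
      · intro l
        dsimp only
        split
        · exact horb _
        · exact horb _
    have cinj : ∀ i j, i < t0 → j < t0 → c i = c j → i = j := by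
      intro i j hi hj heq
      by_contra hne
      rcases lt_or_gt_of_ne hne with h | h
      · exact hred i j h hj (by rw [heq]; exact hwalk j hj)
      · exact hred j i h hi (by rw [← heq]; exact hwalk i hi)
    set S : Set A := c '' {i | i < t0} with hSdef
    have haplusS : aplus ∈ S := ⟨0, by simp only [Set.mem_setOf_eq]; omega, hc0⟩
    have hcS : ∀ i, i < t0 → c (i + 1) ∈ S := by
      intro i hi
      rcases Nat.lt_or_ge (i+1) t0 with h | h
      · exact ⟨i+1, by simp only [Set.mem_setOf_eq]; exact h, rfl⟩
      · rw [(by omega : i + 1 = t0), hct, ← hc0]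
        exact ⟨0, by simp only [Set.mem_setOf_eq]; omega, rfl⟩
    have hxinj : ∀ i j, i < t0 → j < t0 → m (c (i+1)) = m (c (j+1)) → i = j := by
      intro i j hi hj h
      have hc := minj _ _ h
      rcases Nat.lt_or_ge (i+1) t0 with h1 | h1 <;> rcases Nat.lt_or_ge (j+1) t0 with h2 | h2
      · exact Nat.succ_injective (cinj _ _ h1 h2 hc)
      · have hcc : c (i+1) = c 0 := by rw [hc, (by omega : j + 1 = t0), hct, ← hc0]
        exact absurd (cinj _ _ h1 (by omega) hcc) (by omega)
      · have hcc : c (j+1) = c 0 := by rw [← hc, (by omega : i + 1 = t0), hct, ← hc0]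
        exact absurd (cinj _ _ h2 (by omega) hcc) (by omega)
      · omega
    -- the exchanged set is independent
    have hZ : Mat.Indep ((Set.range m \ ((fun i => m (c (i+1))) '' {i | i < t0})) ∪
        ((fun i => n (c i)) '' {i | i < t0})) := by
      refine exchange_indep Mat hE hXB t0 (fun i => m (c (i+1))) (fun i => n (c i)) ?_ ?_ ?_
      · intro i hi
        exact hwalk i hi
      · intro i j hij hjt
        exact hred i j hij hjt
      · exact hxinj
    -- the improved matching
    set M'' : A → Option O := fun a => if a ∈ S then some (n a) else some (m a) with hM''def
    have hSval : ∀ a, a ∈ S → M'' a = some (n a) := fun a ha => if_pos ha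
    have hSnval : ∀ a, a ∉ S → M'' a = some (m a) := fun a ha => if_neg ha
    have hsub : matchedObjs M'' ⊆ (Set.range m \ ((fun i => m (c (i+1))) '' {i | i < t0})) ∪
        ((fun i => n (c i)) '' {i | i < t0}) := by
      rintro o ⟨a, ha⟩
      by_cases haS : a ∈ S
      · rw [hSval a haS] at ha
        obtain ⟨i, hi, rfl⟩ := haS
        exact Or.inr ⟨i, hi, (Option.some.inj ha)⟩
      · rw [hSnval a haS] at ha
        have ho : o = m a := (Option.some.inj ha).symm
        subst ho
        refine Or.inl ⟨⟨a, rfl⟩, ?_⟩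
        rintro ⟨i, hi, hxi⟩
        exact haS ((minj _ _ hxi) ▸ hcS i hi)
    have hM''match : IsMatching adj M'' := by
      constructor
      · intro a o h
        by_cases haS : a ∈ S
        · rw [hSval a haS] at h
          rw [← Option.some.inj h]
          exact hn.1.1 a (n a) rfl
        · rw [hSnval a haS] at h
          rw [← Option.some.inj h]
          exact (hfeas _ hmem).1.1 a (m a) rfl
      · intro a a' o h h'
        have key : ∀ b b' : A, b ∈ S → b' ∉ S → n b ≠ m b' := by
          intro b b' hb hb' hne
          obtain ⟨i, hi, rfl⟩ := hb
          have hmem2 : n (c i) ∈ Set.range m := ⟨b', hne.symm⟩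
          have := hwalk i hi
          rw [exchArc, fundCircuit, if_pos hmem2] at this
          have h2 : m (c (i+1)) = m b' := by
            rw [Set.mem_singleton_iff.1 this, hne]
          exact hb' ((minj _ _ h2) ▸ hcS i hi)
        by_cases haS : a ∈ S <;> by_cases haS' : a' ∈ S
        · rw [hSval a haS] at h; rw [hSval a' haS'] at h'
          exact ninj a a' ((Option.some.inj h).trans (Option.some.inj h').symm)
        · rw [hSval a haS] at h; rw [hSnval a' haS'] at h'
          exact absurd ((Option.some.inj h).trans (Option.some.inj h').symm)
            (key a a' haS haS')
        · rw [hSnval a haS] at h; rw [hSval a' haS'] at h'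
          exact absurd ((Option.some.inj h').trans (Option.some.inj h).symm)
            (key a' a haS' haS)
        · rw [hSnval a haS] at h; rw [hSnval a' haS'] at h'
          exact minj a a' ((Option.some.inj h).trans (Option.some.inj h').symm)
    have hM''cons : IsConstrained adj Mat M'' := ⟨hM''match, hZ.subset hsub⟩
    -- no one in S is hurt
    have hSnotworse : ∀ a ∈ S, ∀ MZ ∈ Mset, ¬ PrefM pref a MZ M'' := by
      intro a haS MZ hMZ hp
      obtain ⟨i, hi, rfl⟩ := haS
      obtain ⟨k, hk⟩ := horb i
      apply hcon k MZ hMZ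
      rw [hk]
      rcases hp with ⟨o, o', h1, h2, h3⟩ | ⟨o, h1, h2⟩
      · rw [hSval _ ⟨i, hi, rfl⟩] at h2
        exact Or.inl ⟨o, n (c i), h1, rfl, (Option.some.inj h2) ▸ h3⟩
      · rw [hSval _ ⟨i, hi, rfl⟩] at h2
        exact absurd h2 (Option.some_ne_none _)
    -- build the dominating set
    have hMfin : Mset.Finite := Set.toFinite _
    set Y : Set (A → Option O) := insert M'' (Mset \ {fun a => some (m a)}) with hYdef
    apply hPO
    refine ⟨Y, ?_, ?_, ?_, ?_⟩
    · rintro W hW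
      rcases hW with rfl | hW
      · exact hM''cons
      · exact hfeas W hW.1
    · -- cardinality
      have h1 : Y.ncard ≤ (Mset \ {fun a => some (m a)}).ncard + 1 := Set.ncard_insert_le _ _
      have h2 : (Mset \ {fun a => some (m a)}).ncard = Mset.ncard - 1 :=
        Set.ncard_diff_singleton_of_mem hmem
      have h3 : 1 ≤ Mset.ncard := (Set.ncard_pos hMfin).2 ⟨_, hmem⟩
      omega
    · -- no agent is worse off
      intro a
      by_cases haS : a ∈ S
      · exact ⟨M'', Set.mem_insert _ _, hSnotworse a haS⟩
      · by_cases hmax : ∃ MZ ∈ Mset, ∃ o, MZ a = some o ∧ pref a o (m a)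
        · obtain ⟨MZ0, hMZ0, o0, ho0, hp0⟩ := hmax
          obtain ⟨w, hw, hwu, hmaxw⟩ := exists_maximal_rel
            (fun u v => ∃ ou ov, u a = some ou ∧ v a = some ov ∧ pref a ou ov)
            (by
              rintro u v w ⟨ou, ov, h1, h2, h3⟩ ⟨ov', ow, h4, h5, h6⟩
              exact ⟨ou, ow, h1, h5, (hpref a).2.1 _ _ _ h3
                ((Option.some.inj (h2.symm.trans h4)) ▸ h6)⟩)
            (by
              rintro u ⟨ou, ov, h1, h2, h3⟩
              exact (hpref a).1 ou ((Option.some.inj (h1.symm.trans h2)) ▸ h3))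
            Mset.ncard Mset hMfin rfl MZ0 hMZ0
          have hwpref : ∃ ow, w a = some ow ∧ pref a ow (m a) := by
            rcases hwu with rfl | ⟨ow, ov, h1, h2, h3⟩
            · exact ⟨o0, ho0, hp0⟩
            · exact ⟨ow, h1, (hpref a).2.1 _ _ _ h3
                ((Option.some.inj (h2.symm.trans ho0)) ▸ hp0)⟩
          obtain ⟨ow, how, hpw⟩ := hwpref
          have hwne : w ≠ (fun a => some (m a)) := by
            intro hc
            rw [hc] at how
            exact (hpref a).1 (m a) ((Option.some.inj how) ▸ hpw)
          refine ⟨w, Set.mem_insert_of_mem _ ⟨hw, hwne⟩, ?_⟩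
          intro MZ hMZ hp
          rcases hp with ⟨o, o', h1, h2, h3⟩ | ⟨o, h1, h2⟩
          · exact hmaxw MZ hMZ ⟨o, o', h1, h2, h3⟩
          · exact hmatched w hw a h2
        · push_neg at hmax
          refine ⟨M'', Set.mem_insert _ _, ?_⟩
          intro MZ hMZ hp
          rcases hp with ⟨o, o', h1, h2, h3⟩ | ⟨o, h1, h2⟩
          · rw [hSnval a haS] at h2
            exact hmax MZ hMZ o h1 ((Option.some.inj h2) ▸ h3)
          · rw [hSnval a haS] at h2
            exact absurd h2 (Option.some_ne_none _)
    · -- aplus strictly improves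
      refine ⟨aplus, M'', Set.mem_insert _ _, ?_⟩
      intro MZ hMZ
      have h1 := hplus MZ hMZ
      rcases h1 with ⟨o, o', hp1, hp2, hp3⟩ | ⟨o, hp1, hp2⟩
      · have : o = n aplus := (Option.some.inj hp1).symm
        subst this
        exact Or.inl ⟨n aplus, o', hSval aplus haplusS, hp2, hp3⟩
      · have : o = n aplus := (Option.some.inj hp1).symm
        subst this
        exact Or.inr ⟨n aplus, hSval aplus haplusS, hp2⟩
  refine ⟨hA, ?_⟩
  intro hfix
  obtain ⟨k, M', hM', hpm⟩ := hA
  have hfixk : ∀ k : ℕ, (σ ^ k) aplus = aplus := by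
    intro k
    induction k with
    | zero => simp
    | succ k ih =>
      rw [pow_succ', Equiv.Perm.mul_apply, ih, hfix]
  rw [hfixk k] at hpm
  have h1 := hplus M' hM'
  rcases hpm with ⟨o, o', hp1, hp2, hp3⟩ | ⟨o, hp1, hp2⟩
  · have hp2' : o' = n aplus := (Option.some.inj hp2).symm
    subst hp2'
    rcases h1 with ⟨p, p', hq1, hq2, hq3⟩ | ⟨p, hq1, hq2⟩
    · have hq1' : p = n aplus := (Option.some.inj hq1).symm
      subst hq1'
      have : p' = o := Option.some.inj (hq2.symm.trans hp1)
      subst this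
      exact (hpref aplus).1 _ ((hpref aplus).2.1 _ _ _ hp3 hq3)
    · exact hmatched M' hM' aplus (hp1 ▸ hq2)
  · exact Option.some_ne_none _ hp2
end

section
/- For every k ∈ ℕ with k ≥ 2, there exists a matroid-constrained matching instance with exactly k + 1 agents, whose preferences are strict partial orders, in which no set of at most k ℐ-constrained matchings is popular; hence its weak Condorcet dimension equals its number of agents. -/
open scoped Classical

/-- `φ(ℳ, N)`: the number of agents preferring some member of `ℳ` to `N`. -/
noncomputable def phiSet {A O : Type*} (pref : A → O → O → Prop)
    (Mset : Set (A → Option O)) (N : A → Option O) : ℕ :=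
  {a : A | ∃ M ∈ Mset, PrefM pref a M N}.ncard

/-- `φ(N, ℳ)`: the number of agents preferring `N` to every member of `ℳ`. -/
noncomputable def phiOne {A O : Type*} (pref : A → O → O → Prop)
    (N : A → Option O) (Mset : Set (A → Option O)) : ℕ :=
  {a : A | ∀ M ∈ Mset, PrefM pref a N M}.ncard

/-- `Mset` is popular (weakly Condorcet-winning) among the feasible matchings `F`:
`μ(ℳ, N) ≥ 0`, i.e. `φ(N, ℳ) ≤ φ(ℳ, N)`, for every feasible `N`. -/
def Popular {A O : Type*} (pref : A → O → O → Prop) (F : Set (A → Option O))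
    (Mset : Set (A → Option O)) : Prop :=
  ∀ N ∈ F, phiOne pref N Mset ≤ phiSet pref Mset N

section Aux

variable (k : ℕ)

/-- Base object type: for each agent, "bottom" objects indexed by `Fin (k*k+1)` and
"top" objects indexed by functions `Fin k → Fin (k*k+1)`. -/
abbrev WCObj : Type := Fin (k + 1) × (Fin (k * k + 1) ⊕ (Fin k → Fin (k * k + 1)))

noncomputable def wcE : WCObj k ≃ Fin (Fintype.card (WCObj k)) := Fintype.equivFin _

noncomputable def wcD (o : Fin (Fintype.card (WCObj k))) : WCObj k := (wcE k).symm o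

lemma wcD_wcE (x : WCObj k) : wcD k (wcE k x) = x := Equiv.symm_apply_apply _ _

def wcAdj (a : Fin (k + 1)) (o : Fin (Fintype.card (WCObj k))) : Prop := (wcD k o).1 = a

def wcPref (a : Fin (k + 1)) (o o' : Fin (Fintype.card (WCObj k))) : Prop :=
  (wcD k o).1 = a ∧ (wcD k o').1 = a ∧
    ∃ f l, (wcD k o).2 = Sum.inr f ∧ (wcD k o').2 = Sum.inl l ∧ ∃ s, f s = l

def wcTop (o : Fin (Fintype.card (WCObj k))) : Prop := ((wcD k o).2).isRight

def wcInd (S : Set (Fin (Fintype.card (WCObj k)))) : Prop :=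
  ∀ x ∈ S, ∀ y ∈ S, wcTop k x → wcTop k y → x = y

noncomputable def wcMat : Matroid (Fin (Fintype.card (WCObj k))) :=
  (IndepMatroid.ofFinite (Set.finite_univ) (wcInd k)
    (by intro x hx; exact absurd hx (Set.notMem_empty x))
    (by intro I J hJ hIJ x hx y hy htx hty; exact hJ x (hIJ hx) y (hIJ hy) htx hty)
    (by
      intro I J hI hJ hlt
      by_cases h : ∃ x, x ∈ J ∧ x ∉ I ∧ ¬ wcTop k x
      · obtain ⟨x, hxJ, hxI, hxT⟩ := h
        refine ⟨x, hxJ, hxI, ?_⟩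
        intro y hy z hz hty htz
        rcases Set.mem_insert_iff.1 hy with rfl | hy
        · exact absurd hty hxT
        rcases Set.mem_insert_iff.1 hz with rfl | hz
        · exact absurd htz hxT
        exact hI y hy z hz hty htz
      · push_neg at h
        have hsub : I ⊆ J := by
          have hss : (J \ I).Subsingleton := by
            intro y hy z hz
            exact hJ y hy.1 z hz.1 (h y hy.1 hy.2) (h z hz.1 hz.2)
          have h1 : (J \ I).ncard ≤ 1 := by
            rcases Set.eq_empty_or_nonempty (J \ I) with he | ⟨a, ha⟩
            · simp [he]
            · rw [hss.eq_singleton_of_mem ha, Set.ncard_singleton]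
          have h2 : (J ∩ I).ncard + (J \ I).ncard = J.ncard :=
            Set.ncard_inter_add_ncard_diff_eq_ncard J I (Set.toFinite _)
          have h3 : I.ncard ≤ (J ∩ I).ncard := by omega
          have h4 : J ∩ I = I :=
            Set.eq_of_subset_of_ncard_le Set.inter_subset_right h3 (Set.toFinite _)
          intro x hx
          have : x ∈ J ∩ I := by rw [h4]; exact hx
          exact this.1
        have hne : (J \ I).Nonempty := by
          rw [Set.diff_nonempty]
          intro hJI
          exact absurd (Set.ncard_le_ncard hJI (Set.toFinite _)) (by omega)
        obtain ⟨x, hx⟩ := hne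
        refine ⟨x, hx.1, hx.2, ?_⟩
        intro y hy z hz hty htz
        have hyJ : y ∈ J := by
          rcases Set.mem_insert_iff.1 hy with rfl | hy
          · exact hx.1
          · exact hsub hy
        have hzJ : z ∈ J := by
          rcases Set.mem_insert_iff.1 hz with rfl | hz
          · exact hx.1
          · exact hsub hz
        exact hJ y hyJ z hzJ hty htz)
    (by intro I _; exact Set.subset_univ I)).matroid

lemma wcMat_ground : (wcMat k).E = Set.univ := rfl

lemma wcMat_indep_iff (S : Set (Fin (Fintype.card (WCObj k)))) :
    (wcMat k).Indep S ↔ wcInd k S := by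
  rw [wcMat, IndepMatroid.matroid_indep_iff]; rfl

lemma wc_prefOrder : IsPrefOrder (wcAdj k) (wcPref k) := by
  intro a
  refine ⟨?_, ?_, ?_⟩
  · rintro o ⟨-, -, f, l, h1, h2, -⟩
    rw [h1] at h2
    exact nomatch h2
  · rintro o o' o'' ⟨-, -, f1, l1, -, b1, -⟩ ⟨-, -, f2, l2, a2, -, -⟩
    rw [b1] at a2
    exact nomatch a2
  · rintro o o' ⟨h1, h2, -⟩
    exact ⟨h1, h2⟩

lemma wc_owner {M : Fin (k + 1) → Option (Fin (Fintype.card (WCObj k)))}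
    (hM : IsMatching (wcAdj k) M) {a o} (h : M a = some o) : (wcD k o).1 = a :=
  hM.1 a o h

lemma wc_oneTop {M : Fin (k + 1) → Option (Fin (Fintype.card (WCObj k)))}
    (hM : IsConstrained (wcAdj k) (wcMat k) M) {a a' o o'}
    (ha : M a = some o) (ha' : M a' = some o') (ht : wcTop k o) (ht' : wcTop k o') :
    a = a' := by
  have hind := (wcMat_indep_iff k _).1 hM.2
  have heq : o = o' := hind o ⟨a, ha⟩ o' ⟨a', ha'⟩ ht ht'
  exact hM.1.2 a a' o ha (heq ▸ ha')

end Aux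

/-- For every `k ≥ 2`, there is a matroid-constrained matching
instance with exactly `k + 1` agents and partial-order preferences in which no set of
at most `k` `ℐ`-constrained matchings is popular, while some popular set of at most
`k + 1` such matchings exists; hence its weak Condorcet dimension equals its number of
agents. -/
theorem exists_matroid_instance_weak_condorcet_dimension_eq_agents
    (k : ℕ) (hk : 2 ≤ k) :
    ∃ (nO : ℕ) (adj : Fin (k + 1) → Fin nO → Prop)
      (pref : Fin (k + 1) → Fin nO → Fin nO → Prop) (Mat : Matroid (Fin nO)),
      Mat.E = Set.univ ∧ IsPrefOrder adj pref ∧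
      (∀ Mset : Set (Fin (k + 1) → Option (Fin nO)),
        (∀ M ∈ Mset, IsConstrained adj Mat M) → Mset.ncard ≤ k →
        ¬ Popular pref {M | IsConstrained adj Mat M} Mset) ∧
      (∃ Mset : Set (Fin (k + 1) → Option (Fin nO)),
        (∀ M ∈ Mset, IsConstrained adj Mat M) ∧ Mset.ncard ≤ k + 1 ∧
        Popular pref {M | IsConstrained adj Mat M} Mset) := by
  refine ⟨Fintype.card (WCObj k), wcAdj k, wcPref k, wcMat k, wcMat_ground k,
    wc_prefOrder k, ?_, ?_⟩
  · -- no set of at most `k` constrained matchings is popular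
    intro Mset hfeas hcard hpop
    -- an agent never given a top object by any member of Mset
    set Topped : Set (Fin (k + 1)) :=
      {a | ∃ M ∈ Mset, ∃ o, M a = some o ∧ wcTop k o} with hToppedDef
    have hwitness : ∀ a ∈ Topped, ∃ M, M ∈ Mset ∧ ∃ o, M a = some o ∧ wcTop k o :=
      fun a ha => ha
    classical
    set w : Fin (k + 1) → (Fin (k + 1) → Option (Fin (Fintype.card (WCObj k)))) :=
      fun a => if h : a ∈ Topped then (hwitness a h).choose else (fun _ => none) with hw
    have hwmem : ∀ a ∈ Topped, w a ∈ Mset := by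
      intro a ha
      rw [hw]; simp only [dif_pos ha]
      exact (hwitness a ha).choose_spec.1
    have hwspec : ∀ a (ha : a ∈ Topped), ∃ o, (w a) a = some o ∧ wcTop k o := by
      intro a ha
      rw [hw]; simp only [dif_pos ha]
      exact (hwitness a ha).choose_spec.2
    have hinj : Set.InjOn w Topped := by
      intro a ha a' ha' heq
      obtain ⟨o, ho, hto⟩ := hwspec a ha
      obtain ⟨o', ho', hto'⟩ := hwspec a' ha'
      rw [heq] at ho
      exact wc_oneTop k (hfeas _ (hwmem a' ha')) ho ho' hto hto'
    have hTle : Topped.ncard ≤ k :=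
      le_trans (Set.ncard_le_ncard_of_injOn w hwmem hinj (Set.toFinite _)) hcard
    have hTne : Topped ≠ Set.univ := by
      intro h
      rw [h, Set.ncard_univ, Nat.card_eq_fintype_card, Fintype.card_fin] at hTle
      omega
    obtain ⟨b, hb⟩ := (Set.ne_univ_iff_exists_notMem _).1 hTne
    -- enumerate Mset by Fin k
    have hfin : Mset.Finite := Set.toFinite _
    set L := hfin.toFinset.toList with hL
    have hlen : L.length ≤ k := by
      rw [hL, Finset.length_toList, ← Set.ncard_eq_toFinset_card Mset hfin]
      exact hcard
    set g : Fin k → (Fin (k + 1) → Option (Fin (Fintype.card (WCObj k)))) :=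
      fun t => L.getD t.1 (fun _ => none) with hgdef
    have hg : ∀ M ∈ Mset, ∃ t : Fin k, g t = M := by
      intro M hM
      have hmL : M ∈ L := by
        rw [hL, Finset.mem_toList, Set.Finite.mem_toFinset]; exact hM
      obtain ⟨i, hi, hieq⟩ := List.getElem_of_mem hmL
      refine ⟨⟨i, lt_of_lt_of_le hi hlen⟩, ?_⟩
      rw [hgdef]
      simp only
      rw [List.getD_eq_getElem L _ hi]
      exact hieq
    -- the top object we will give to agent b
    set f : Fin k → Fin (k * k + 1) := fun t =>
      Option.elim ((g t) b) 0
        (fun o => Sum.elim (fun l => l) (fun _ => 0) ((wcD k o).2)) with hfdef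
    have hgain : ∀ M ∈ Mset, ∀ o, M b = some o →
        ∃ l, (wcD k o).2 = Sum.inl l ∧ ∃ s : Fin k, f s = l := by
      intro M hM o ho
      obtain ⟨t, ht⟩ := hg M hM
      cases hz : (wcD k o).2 with
      | inl l =>
        refine ⟨l, rfl, t, ?_⟩
        rw [hfdef]
        simp only [ht, ho, Option.elim_some, hz, Sum.elim_inl]
      | inr f' =>
        exact absurd ⟨M, hM, o, ho, by rw [wcTop, hz]; rfl⟩ hb
    -- safe columns for the other agents
    set H : Fin (k + 1) → Fin k × Fin k → Fin (k * k + 1) := fun a ts =>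
      Option.elim ((g ts.1) a) 0
        (fun o => Sum.elim (fun _ => 0) (fun f' => f' ts.2) ((wcD k o).2)) with hHdef
    have hsafe : ∀ a, ∃ l : Fin (k * k + 1), ∀ ts, H a ts ≠ l := by
      intro a
      by_contra hcon
      push_neg at hcon
      have hsurj : Function.Surjective (H a) := fun l => hcon l
      have hle := Fintype.card_le_of_surjective _ hsurj
      simp only [Fintype.card_prod, Fintype.card_fin] at hle
      omega
    choose la hla using hsafe
    -- the deviating matching N
    set N : Fin (k + 1) → Option (Fin (Fintype.card (WCObj k))) := fun a =>
      if a = b then some ((wcE k) (b, Sum.inr f))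
      else some ((wcE k) (a, Sum.inl (la a))) with hNdef
    have hNb : N b = some ((wcE k) (b, Sum.inr f)) := by rw [hNdef]; simp
    have hNa : ∀ a, a ≠ b → N a = some ((wcE k) (a, Sum.inl (la a))) := by
      intro a ha; rw [hNdef]; simp [ha]
    have hNdec : ∀ a o, N a = some o →
        wcD k o = (if a = b then ((b : Fin (k+1)), Sum.inr f) else (a, Sum.inl (la a))) := by
      intro a o h
      by_cases hab : a = b
      · subst hab
        rw [hNb, Option.some.injEq] at h
        rw [if_pos rfl, ← h, wcD_wcE]
      · rw [hNa a hab, Option.some.injEq] at h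
        rw [if_neg hab, ← h, wcD_wcE]
    have hNfeas : IsConstrained (wcAdj k) (wcMat k) N := by
      refine ⟨⟨?_, ?_⟩, ?_⟩
      · intro a o h
        have := hNdec a o h
        rw [wcAdj, this]
        by_cases hab : a = b
        · subst hab; rw [if_pos rfl]
        · rw [if_neg hab]
      · intro a a' o h h'
        have h1 := hNdec a o h
        have h2 := hNdec a' o h'
        have e1 : (wcD k o).1 = a := by
          rw [h1]; by_cases hab : a = b
          · subst hab; rw [if_pos rfl]
          · rw [if_neg hab]
        have e2 : (wcD k o).1 = a' := by
          rw [h2]; by_cases hab : a' = b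
          · subst hab; rw [if_pos rfl]
          · rw [if_neg hab]
        rw [← e1, e2]
      · rw [wcMat_indep_iff]
        intro x hx y hy htx hty
        have hkey : ∀ z ∈ matchedObjs N, wcTop k z → z = (wcE k) (b, Sum.inr f) := by
          rintro z ⟨a, ha⟩ htz
          by_cases hab : a = b
          · subst hab
            rw [hNb, Option.some.injEq] at ha
            exact ha.symm
          · rw [hNa a hab, Option.some.injEq] at ha
            exfalso
            rw [wcTop, ← ha, wcD_wcE] at htz
            exact Bool.false_ne_true htz
        rw [hkey x hx htx, hkey y hy hty]
    -- no agent prefers any member of Mset to N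
    have hloss : {a | ∃ M ∈ Mset, PrefM (wcPref k) a M N} = ∅ := by
      ext a
      simp only [Set.mem_setOf_eq, Set.mem_empty_iff_false, iff_false]
      rintro ⟨M, hM, hpref⟩
      rcases hpref with ⟨o, o', hMa, hNa', hp⟩ | ⟨o, hMa, hNa'⟩
      · obtain ⟨-, -, f', l, ho2, ho'2, s, hs⟩ := hp
        have hdo' := hNdec a o' hNa'
        by_cases hab : a = b
        · rw [if_pos hab] at hdo'
          rw [hdo'] at ho'2
          exact Sum.inr_ne_inl ho'2
        · rw [if_neg hab] at hdo'
          rw [hdo'] at ho'2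
          have hl : la a = l := by simpa using ho'2
          obtain ⟨t, ht⟩ := hg M hM
          have : H a (t, s) = la a := by
            rw [hHdef]
            simp only [ht, hMa, Option.elim_some, ho2, Sum.elim_inr]
            rw [hs, ← hl]
          exact hla a (t, s) this
      · by_cases hab : a = b
        · rw [hab, hNb] at hNa'; exact nomatch hNa'
        · rw [hNa a hab] at hNa'; exact nomatch hNa'
    -- agent b prefers N to every member of Mset
    have hbmem : b ∈ {a | ∀ M ∈ Mset, PrefM (wcPref k) a N M} := by
      intro M hM
      cases hMb : M b with
      | none => exact Or.inr ⟨_, hNb, hMb⟩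
      | some o =>
        obtain ⟨l, hl, s, hs⟩ := hgain M hM o hMb
        refine Or.inl ⟨_, o, hNb, hMb, ?_, ?_, f, l, ?_, hl, s, hs⟩
        · rw [wcD_wcE]
        · exact wc_owner k (hfeas M hM).1 hMb
        · rw [wcD_wcE]
    have h1 : 1 ≤ phiOne (wcPref k) N Mset := by
      rw [phiOne]
      have : 0 < {a | ∀ M ∈ Mset, PrefM (wcPref k) a N M}.ncard :=
        (Set.ncard_pos (Set.toFinite _)).2 ⟨b, hbmem⟩
      omega
    have h0 : phiSet (wcPref k) Mset N = 0 := by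
      rw [phiSet, hloss, Set.ncard_empty]
    have := hpop N hNfeas
    omega
  · -- a popular set of k+1 matchings
    set Mstar : Fin (k + 1) → (Fin (k + 1) → Option (Fin (Fintype.card (WCObj k)))) :=
      fun j a => if a = j then some ((wcE k) (j, Sum.inr (fun _ => 0))) else none
      with hMstar
    refine ⟨Set.range Mstar, ?_, ?_, ?_⟩
    · rintro M ⟨j, rfl⟩
      refine ⟨⟨?_, ?_⟩, ?_⟩
      · intro a o h
        rw [hMstar] at h
        simp only at h
        by_cases haj : a = j
        · rw [if_pos haj, Option.some.injEq] at h
          rw [wcAdj, ← h, wcD_wcE, haj]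
        · rw [if_neg haj] at h; exact nomatch h
      · intro a a' o h h'
        rw [hMstar] at h h'
        simp only at h h'
        by_cases haj : a = j
        · by_cases haj' : a' = j
          · rw [haj, haj']
          · rw [if_neg haj'] at h'; exact nomatch h'
        · rw [if_neg haj] at h; exact nomatch h
      · rw [wcMat_indep_iff]
        have hkey : ∀ z ∈ matchedObjs (Mstar j), z = (wcE k) (j, Sum.inr (fun _ => 0)) := by
          rintro z ⟨a, ha⟩
          rw [hMstar] at ha
          simp only at ha
          by_cases haj : a = j
          · rw [if_pos haj, Option.some.injEq] at ha; exact ha.symm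
          · rw [if_neg haj] at ha; exact nomatch ha
        intro x hx y hy _ _
        rw [hkey x hx, hkey y hy]
    · rw [← Set.image_univ]
      refine le_trans (Set.ncard_image_le Set.finite_univ) ?_
      rw [Set.ncard_univ, Nat.card_eq_fintype_card, Fintype.card_fin]
    · intro N _
      have hempty : {a | ∀ M ∈ Set.range Mstar, PrefM (wcPref k) a N M} = ∅ := by
        ext a
        simp only [Set.mem_setOf_eq, Set.mem_empty_iff_false, iff_false]
        intro h
        have := h (Mstar a) ⟨a, rfl⟩
        rcases this with ⟨o, o', hNa, hMa, hp⟩ | ⟨o, hNa, hMa⟩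
        · rw [hMstar] at hMa
          simp only [if_true, Option.some.injEq] at hMa
          obtain ⟨-, -, f', l, -, ho'2, -⟩ := hp
          rw [← hMa, wcD_wcE] at ho'2
          exact Sum.inr_ne_inl ho'2
        · rw [hMstar] at hMa
          simp only [if_true] at hMa
          exact Option.some_ne_none _ hMa
      rw [phiOne, hempty, Set.ncard_empty]
      exact Nat.zero_le _
end

section
/- There exists an assignment instance (a matching instance with strict rankings in which the feasible alternatives are the perfect matchings of G) together with a set {M₁, M₂} of two perfect matchings that is Pareto-optimal among sets of perfect matchings but is not popular: there is a perfect matching N with μ({M₁, M₂}, N) < 0. -/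
open scoped Classical

/-- Preferences are strict rankings: each `pref a` is a strict linear order on the
objects adjacent to `a`. -/
def IsStrictRanking {A O : Type*} (adj : A → O → Prop) (pref : A → O → O → Prop) : Prop :=
  IsPrefOrder adj pref ∧
  ∀ a o o', adj a o → adj a o' → o ≠ o' → pref a o o' ∨ pref a o' o

/-- A perfect matching: every agent and every object is matched. -/
def IsPerfect {A O : Type*} (adj : A → O → Prop) (M : A → Option O) : Prop :=
  IsMatching adj M ∧ (∀ a : A, M a ≠ none) ∧ (∀ o : O, ∃ a : A, M a = some o)


/-- Adjacency table for the counterexample instance. -/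
def adjB : Fin 5 → Fin 5 → Bool :=
  ![![true, false, false, false, true],
    ![true, true, false, false, false],
    ![false, false, true, true, true],
    ![false, true, false, true, false],
    ![false, false, true, false, true]]

/-- Rank table (lower is better); values at non-adjacent entries are irrelevant. -/
def rk : Fin 5 → Fin 5 → ℕ :=
  ![![1, 9, 9, 9, 0],
    ![0, 1, 9, 9, 9],
    ![9, 9, 1, 2, 0],
    ![9, 0, 9, 1, 9],
    ![9, 9, 1, 9, 0]]

def adjP (a o : Fin 5) : Prop := adjB a o = true

def prefP (a o o' : Fin 5) : Prop := adjB a o = true ∧ adjB a o' = true ∧ rk a o < rk a o'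

instance (a o : Fin 5) : Decidable (adjP a o) := by unfold adjP; infer_instance
instance (a o o' : Fin 5) : Decidable (prefP a o o') := by unfold prefP; infer_instance
instance (a : Fin 5) (M N : Fin 5 → Option (Fin 5)) :
    Decidable (PrefM prefP a M N) := by unfold PrefM; infer_instance
instance (M : Fin 5 → Option (Fin 5)) : Decidable (IsPerfect adjP M) := by
  unfold IsPerfect IsMatching; infer_instance

def Ma : Fin 5 → Option (Fin 5) := ![some 0, some 1, some 2, some 3, some 4]
def Mb : Fin 5 → Option (Fin 5) := ![some 0, some 1, some 4, some 3, some 2]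
def Nc : Fin 5 → Option (Fin 5) := ![some 4, some 0, some 3, some 1, some 2]

attribute [-instance] Classical.propDecidable in
set_option synthInstance.maxSize 1000 in
lemma key5 : ∀ b0 b1 b2 b3 b4 : Fin 5,
    (adjB 0 b0 = true ∧ adjB 1 b1 = true ∧ adjB 2 b2 = true ∧
     adjB 3 b3 = true ∧ adjB 4 b4 = true ∧
     b0 ≠ b1 ∧ b0 ≠ b2 ∧ b0 ≠ b3 ∧ b0 ≠ b4 ∧ b1 ≠ b2 ∧ b1 ≠ b3 ∧ b1 ≠ b4 ∧
     b2 ≠ b3 ∧ b2 ≠ b4 ∧ b3 ≠ b4) →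
    (b0 = 0 ∧ b1 = 1 ∧ b2 = 2 ∧ b3 = 3 ∧ b4 = 4) ∨
    (b0 = 0 ∧ b1 = 1 ∧ b2 = 4 ∧ b3 = 3 ∧ b4 = 2) ∨
    (b0 = 4 ∧ b1 = 0 ∧ b2 = 3 ∧ b3 = 1 ∧ b4 = 2) := by decide

lemma classify (M : Fin 5 → Option (Fin 5)) (h : IsPerfect adjP M) :
    M = Ma ∨ M = Mb ∨ M = Nc := by
  obtain ⟨⟨hadj, hinj⟩, hsome, -⟩ := h
  obtain ⟨o0, e0⟩ := Option.ne_none_iff_exists'.mp (hsome 0)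
  obtain ⟨o1, e1⟩ := Option.ne_none_iff_exists'.mp (hsome 1)
  obtain ⟨o2, e2⟩ := Option.ne_none_iff_exists'.mp (hsome 2)
  obtain ⟨o3, e3⟩ := Option.ne_none_iff_exists'.mp (hsome 3)
  obtain ⟨o4, e4⟩ := Option.ne_none_iff_exists'.mp (hsome 4)
  have d01 : o0 ≠ o1 := fun h => absurd (hinj 0 1 o0 e0 (by rw [e1, h])) (by decide)
  have d02 : o0 ≠ o2 := fun h => absurd (hinj 0 2 o0 e0 (by rw [e2, h])) (by decide)
  have d03 : o0 ≠ o3 := fun h => absurd (hinj 0 3 o0 e0 (by rw [e3, h])) (by decide)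
  have d04 : o0 ≠ o4 := fun h => absurd (hinj 0 4 o0 e0 (by rw [e4, h])) (by decide)
  have d12 : o1 ≠ o2 := fun h => absurd (hinj 1 2 o1 e1 (by rw [e2, h])) (by decide)
  have d13 : o1 ≠ o3 := fun h => absurd (hinj 1 3 o1 e1 (by rw [e3, h])) (by decide)
  have d14 : o1 ≠ o4 := fun h => absurd (hinj 1 4 o1 e1 (by rw [e4, h])) (by decide)
  have d23 : o2 ≠ o3 := fun h => absurd (hinj 2 3 o2 e2 (by rw [e3, h])) (by decide)
  have d24 : o2 ≠ o4 := fun h => absurd (hinj 2 4 o2 e2 (by rw [e4, h])) (by decide)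
  have d34 : o3 ≠ o4 := fun h => absurd (hinj 3 4 o3 e3 (by rw [e4, h])) (by decide)
  have k := key5 o0 o1 o2 o3 o4
    ⟨hadj 0 o0 e0, hadj 1 o1 e1, hadj 2 o2 e2, hadj 3 o3 e3, hadj 4 o4 e4,
     d01, d02, d03, d04, d12, d13, d14, d23, d24, d34⟩
  rcases k with ⟨rfl, rfl, rfl, rfl, rfl⟩ | ⟨rfl, rfl, rfl, rfl, rfl⟩ |
      ⟨rfl, rfl, rfl, rfl, rfl⟩
  · exact Or.inl (funext fun a => by fin_cases a; exacts [e0, e1, e2, e3, e4])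
  · exact Or.inr (Or.inl (funext fun a => by
      fin_cases a; exacts [e0, e1, e2, e3, e4]))
  · exact Or.inr (Or.inr (funext fun a => by
      fin_cases a; exacts [e0, e1, e2, e3, e4]))

/-- There is an assignment instance (strict rankings, feasible
alternatives the perfect matchings) and a Pareto-optimal set `{M₁, M₂}` of two perfect
matchings that is not popular: some perfect matching `N` satisfies
`μ({M₁, M₂}, N) < 0`. -/
theorem exists_pareto_optimal_pair_not_popular_assignment :
    ∃ (nA nO : ℕ) (adj : Fin nA → Fin nO → Prop)
      (pref : Fin nA → Fin nO → Fin nO → Prop),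
      IsStrictRanking adj pref ∧
      ∃ M₁ M₂ : Fin nA → Option (Fin nO), M₁ ≠ M₂ ∧
        IsPerfect adj M₁ ∧ IsPerfect adj M₂ ∧
        ParetoOptimal pref {M | IsPerfect adj M} {M₁, M₂} ∧
        ∃ N : Fin nA → Option (Fin nO), IsPerfect adj N ∧
          phiSet pref {M₁, M₂} N < phiOne pref N {M₁, M₂} := by
  refine ⟨5, 5, adjP, prefP, ?_, Ma, Mb, ?_, ?_, ?_, ?_, Nc, ?_, ?_⟩
  · unfold IsStrictRanking IsPrefOrder
    constructor
    · intro a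
      exact ⟨by revert a; decide, by revert a; decide, by revert a; decide⟩
    · decide
  · decide
  · decide
  · decide
  · rintro ⟨Y, hYF, hcard, hcov, a, W, hWY, hW⟩
    have hMaMb : Ma ∈ ({Ma, Mb} : Set (Fin 5 → Option (Fin 5))) := Set.mem_insert _ _
    have hMbMb : Mb ∈ ({Ma, Mb} : Set (Fin 5 → Option (Fin 5))) :=
      Set.mem_insert_of_mem _ rfl
    have irrA : ∀ b : Fin 5, ¬ PrefM prefP b Ma Ma := by decide
    have irrB : ∀ b : Fin 5, ¬ PrefM prefP b Mb Mb := by decide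
    have hWN : W = Nc := by
      rcases classify W (hYF hWY) with h | h | h
      · exact absurd (h ▸ hW Ma hMaMb) (irrA a)
      · exact absurd (h ▸ hW Mb hMbMb) (irrB a)
      · exact h
    have hNY : Nc ∈ Y := hWN ▸ hWY
    obtain ⟨P, hPY, hP⟩ := hcov 2
    have hPMb : P = Mb := by
      rcases classify P (hYF hPY) with h | h | h
      · exact absurd (by decide : PrefM prefP 2 Mb Ma) (h ▸ hP Mb hMbMb)
      · exact h
      · exact absurd (by decide : PrefM prefP 2 Mb Nc) (h ▸ hP Mb hMbMb)
    have hMbY : Mb ∈ Y := hPMb ▸ hPY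
    obtain ⟨Q, hQY, hQ⟩ := hcov 4
    have hQMa : Q = Ma := by
      rcases classify Q (hYF hQY) with h | h | h
      · exact h
      · exact absurd (by decide : PrefM prefP 4 Ma Mb) (h ▸ hQ Ma hMaMb)
      · exact absurd (by decide : PrefM prefP 4 Ma Nc) (h ▸ hQ Ma hMaMb)
    have hMaY : Ma ∈ Y := hQMa ▸ hQY
    have hYeq : Y = {Ma, Mb, Nc} := by
      apply Set.Subset.antisymm
      · intro M hM
        rcases classify M (hYF hM) with h | h | h <;> simp [h]
      · intro M hM
        simp only [Set.mem_insert_iff, Set.mem_singleton_iff] at hM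
        rcases hM with rfl | rfl | rfl
        exacts [hMaY, hMbY, hNY]
    have h3 : ({Ma, Mb, Nc} : Set (Fin 5 → Option (Fin 5))).ncard = 3 := by
      rw [Set.ncard_insert_of_notMem (by
        simp only [Set.mem_insert_iff, Set.mem_singleton_iff]
        decide), Set.ncard_pair (by decide)]
    have h2 : ({Ma, Mb} : Set (Fin 5 → Option (Fin 5))).ncard = 2 :=
      Set.ncard_pair (by decide)
    rw [hYeq, h3, h2] at hcard
    omega
  · decide
  · have e1 : {a : Fin 5 | ∃ M ∈ ({Ma, Mb} : Set (Fin 5 → Option (Fin 5))),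
        PrefM prefP a M Nc} = {2, 4} := by
      ext a
      simp only [Set.mem_setOf_eq, Set.mem_insert_iff, Set.mem_singleton_iff,
        exists_eq_or_imp, exists_eq_left]
      revert a; decide
    have e2 : {a : Fin 5 | ∀ M ∈ ({Ma, Mb} : Set (Fin 5 → Option (Fin 5))),
        PrefM prefP a Nc M} = {0, 1, 3} := by
      ext a
      simp only [Set.mem_setOf_eq, Set.mem_insert_iff, Set.mem_singleton_iff,
        forall_eq_or_imp, forall_eq]
      revert a; decide
    unfold phiSet phiOne
    rw [e1, e2, Set.ncard_pair (by decide),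
      Set.ncard_insert_of_notMem (by
        simp only [Set.mem_insert_iff, Set.mem_singleton_iff]; decide),
      Set.ncard_pair (by decide)]
    omega
end
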